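/- arXiv:0708.0614 — 5 statements merged into one kernel-verified Lean document; each statement's English description precedes it below -/
import Mathlib

section
/- Let a, b > 0, let B be a random variable with the Beta(a,b) distribution, and let M be a nonnegative random variable independent of B. Then for every λ ≥ 0, E[(1 + λBM)^{-(a+b)}] = E[(1 + λM)^{-a}]. (This is the Cauchy–Stieltjes transform form of the beta-scaling identity of Theorem 2.1: multiplying a Dirichlet mean of order a by an independent Beta(a,b) variable produces a Dirichlet mean of order a+b.) -/
open MeasureTheory ProbabilityTheory

/-- The Beta(a,b) distribution on (0,1) with density
`y^(a-1) (1-y)^(b-1) / B(a,b)` where `B(a,b) = Γ(a)Γ(b)/Γ(a+b)`. -/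
noncomputable def betaMeasure (a b : ℝ) : Measure ℝ :=
  (volume.restrict (Set.Ioo (0:ℝ) 1)).withDensity fun y =>
    ENNReal.ofReal (Real.Gamma (a + b) / (Real.Gamma a * Real.Gamma b) *
      y ^ (a - 1) * (1 - y) ^ (b - 1))

lemma real_betaIntegral {a b : ℝ} (ha : 0 < a) (hb : 0 < b) :
    ∫ x in Set.Ioo (0:ℝ) 1, x ^ (a-1) * (1-x) ^ (b-1)
      = Real.Gamma a * Real.Gamma b / Real.Gamma (a+b) := by
  have hre : Complex.betaIntegral a b
      = ((∫ x in Set.Ioo (0:ℝ) 1, x ^ (a-1) * (1-x) ^ (b-1) : ℝ) : ℂ) := by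
    rw [Complex.betaIntegral, intervalIntegral.integral_of_le zero_le_one,
      MeasureTheory.integral_Ioc_eq_integral_Ioo]
    have hcongr : Set.EqOn (fun x : ℝ => (x:ℂ) ^ ((a:ℂ)-1) * (1-(x:ℂ)) ^ ((b:ℂ)-1))
        (fun x : ℝ => ((x ^ (a-1) * (1-x) ^ (b-1) : ℝ) : ℂ)) (Set.Ioo 0 1) := by
      intro x hx
      simp only
      rw [show ((a:ℂ)-1) = ((a-1:ℝ):ℂ) by push_cast; ring,
        show ((b:ℂ)-1) = ((b-1:ℝ):ℂ) by push_cast; ring,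
        show (1 - (x:ℂ)) = ((1-x:ℝ):ℂ) by push_cast; ring,
        ← Complex.ofReal_cpow hx.1.le,
        ← Complex.ofReal_cpow (by linarith [hx.2] : (0:ℝ) ≤ 1 - x)]
      push_cast
      ring
    rw [setIntegral_congr_fun measurableSet_Ioo hcongr]
    exact integral_ofReal
  have h := Complex.Gamma_mul_Gamma_eq_betaIntegral
    (s := (a:ℂ)) (t := (b:ℂ)) (by simpa using ha) (by simpa using hb)
  rw [hre, ← Complex.ofReal_add, Complex.Gamma_ofReal, Complex.Gamma_ofReal,
    Complex.Gamma_ofReal, ← Complex.ofReal_mul, ← Complex.ofReal_mul] at h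
  have h' := Complex.ofReal_injective h
  have hG : Real.Gamma (a+b) ≠ 0 := (Real.Gamma_pos_of_pos (by linarith)).ne'
  field_simp
  linarith [h']

lemma beta_cov {a b c : ℝ} (ha : 0 < a) (hb : 0 < b) (hc : 0 ≤ c) :
    ∫ y in Set.Ioo (0:ℝ) 1, y ^ (a-1) * (1-y) ^ (b-1) * (1 + c*y) ^ (-(a+b))
      = Real.Gamma a * Real.Gamma b / Real.Gamma (a+b) * (1+c) ^ (-a) := by
  set d : ℝ := 1 + c with hd_def
  have hd : 0 < d := by positivity
  have hden : ∀ u ∈ Set.Ioo (0:ℝ) 1, 0 < d - c*u := by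
    intro u hu
    nlinarith [hu.1, hu.2]
  set g : ℝ → ℝ := fun u => u / (d - c*u) with hg_def
  set g' : ℝ → ℝ := fun u => d / (d - c*u)^2 with hg'_def
  have himg : g '' Set.Ioo 0 1 = Set.Ioo 0 1 := by
    apply Set.Subset.antisymm
    · rintro _ ⟨u, hu, rfl⟩
      have hw := hden u hu
      constructor
      · exact div_pos hu.1 hw
      · rw [div_lt_one hw]
        nlinarith [hu.1, hu.2]
    · rintro y hy
      have h0y : 0 < y := hy.1
      have hcy : 0 < 1 + c*y := by nlinarith [hy.1, hy.2]
      refine ⟨d*y/(1+c*y), ⟨by positivity, ?_⟩, ?_⟩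
      · rw [div_lt_one hcy]
        nlinarith [hy.1, hy.2]
      · show d*y/(1+c*y) / (d - c*(d*y/(1+c*y))) = y
        rw [div_div]
        rw [show (1+c*y) * (d - c*(d*y/(1+c*y))) = d by field_simp; ring]
        field_simp
  have hderiv : ∀ u ∈ Set.Ioo (0:ℝ) 1, HasDerivWithinAt g (g' u) (Set.Ioo 0 1) u := by
    intro u hu
    have hw := hden u hu
    have h1 : HasDerivAt (fun u : ℝ => d - c*u) (-c) u := by
      simpa using ((hasDerivAt_id u).const_mul c).const_sub d
    have h2 := (hasDerivAt_id u).div h1 hw.ne'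
    have : (1 * (d - c * u) - u * -c) / (d - c * u) ^ 2 = g' u := by
      rw [hg'_def]
      field_simp
      ring
    exact (this ▸ h2).hasDerivWithinAt
  have hinj : Set.InjOn g (Set.Ioo 0 1) := by
    intro u hu v hv h
    have hwu := hden u hu
    have hwv := hden v hv
    rw [hg_def] at h
    simp only at h
    rw [div_eq_div_iff hwu.ne' hwv.ne'] at h
    have : u * d = v * d := by nlinarith
    exact mul_right_cancel₀ hd.ne' this
  have key : ∀ u ∈ Set.Ioo (0:ℝ) 1,
      |g' u| • ((g u) ^ (a-1) * (1 - g u) ^ (b-1) * (1 + c * g u) ^ (-(a+b)))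
        = d ^ (-a) * (u ^ (a-1) * (1-u) ^ (b-1)) := by
    intro u hu
    have hu1 : 0 < u := hu.1
    have h1u : 0 < 1 - u := by linarith [hu.2]
    have hw : 0 < d - c*u := hden u hu
    set w : ℝ := d - c*u
    have hgu : g u = u / w := rfl
    have hg1 : 1 - g u = d*(1-u)/w := by
      rw [hgu]
      field_simp
      ring
    have hg2 : 1 + c * g u = d / w := by
      rw [hgu]
      field_simp
      ring
    have hg'u : g' u = d / w^2 := rfl
    rw [hgu, hg1, hg2, hg'u, smul_eq_mul,
      abs_of_pos (by positivity : (0:ℝ) < d / w^2)]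
    rw [Real.rpow_def_of_pos (by positivity : (0:ℝ) < u/w),
      Real.rpow_def_of_pos (by positivity : (0:ℝ) < d*(1-u)/w),
      Real.rpow_def_of_pos (by positivity : (0:ℝ) < d/w),
      Real.rpow_def_of_pos hd,
      Real.rpow_def_of_pos hu1,
      Real.rpow_def_of_pos h1u,
      Real.log_div hu1.ne' hw.ne',
      Real.log_div (by positivity : (d*(1-u)) ≠ 0) hw.ne',
      Real.log_div hd.ne' hw.ne',
      Real.log_mul hd.ne' h1u.ne']
    rw [show d / w^2 = Real.exp (Real.log d - 2 * Real.log w) by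
      rw [Real.exp_sub, Real.exp_log hd, show (2:ℝ) * Real.log w = ((2:ℕ):ℝ) * Real.log w by
        norm_num, Real.exp_nat_mul, Real.exp_log hw]]
    rw [← Real.exp_add, ← Real.exp_add, ← Real.exp_add, ← Real.exp_add, ← Real.exp_add,
      Real.exp_eq_exp]
    ring
  calc ∫ y in Set.Ioo (0:ℝ) 1, y ^ (a-1) * (1-y) ^ (b-1) * (1 + c*y) ^ (-(a+b))
      = ∫ y in g '' Set.Ioo 0 1, y ^ (a-1) * (1-y) ^ (b-1) * (1 + c*y) ^ (-(a+b)) := by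
        rw [himg]
    _ = ∫ u in Set.Ioo (0:ℝ) 1,
          |g' u| • ((g u) ^ (a-1) * (1 - g u) ^ (b-1) * (1 + c * g u) ^ (-(a+b))) :=
        integral_image_eq_integral_abs_deriv_smul measurableSet_Ioo hderiv hinj _
    _ = ∫ u in Set.Ioo (0:ℝ) 1, d ^ (-a) * (u ^ (a-1) * (1-u) ^ (b-1)) :=
        setIntegral_congr_fun measurableSet_Ioo key
    _ = d ^ (-a) * ∫ u in Set.Ioo (0:ℝ) 1, u ^ (a-1) * (1-u) ^ (b-1) := by
        rw [integral_const_mul]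
    _ = Real.Gamma a * Real.Gamma b / Real.Gamma (a+b) * (1+c) ^ (-a) := by
        rw [real_betaIntegral ha hb]
        ring

lemma beta_transform {a b c : ℝ} (ha : 0 < a) (hb : 0 < b) (hc : 0 ≤ c) :
    ∫ y, (1 + c * y) ^ (-(a+b)) ∂(_root_.betaMeasure a b) = (1 + c) ^ (-a) := by
  have hGa := Real.Gamma_pos_of_pos ha
  have hGb := Real.Gamma_pos_of_pos hb
  have hGab := Real.Gamma_pos_of_pos (by linarith : (0:ℝ) < a + b)
  set C : ℝ := Real.Gamma (a + b) / (Real.Gamma a * Real.Gamma b) with hC_def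
  have hC : 0 < C := by positivity
  set ρ : ℝ → NNReal := fun y => (C * y ^ (a-1) * (1-y) ^ (b-1)).toNNReal with hρ_def
  have hρ_meas : Measurable ρ := by
    apply Measurable.real_toNNReal
    exact ((measurable_const.mul (measurable_id.pow measurable_const)).mul
      ((measurable_const.sub measurable_id).pow measurable_const))
  have hmeq : _root_.betaMeasure a b
      = (volume.restrict (Set.Ioo (0:ℝ) 1)).withDensity fun y => ((ρ y : NNReal) : ENNReal) := rfl
  rw [hmeq, integral_withDensity_eq_integral_smul hρ_meas]
  have : ∫ y in Set.Ioo (0:ℝ) 1, ρ y • (1 + c * y) ^ (-(a+b))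
      = ∫ y in Set.Ioo (0:ℝ) 1, C * (y ^ (a-1) * (1-y) ^ (b-1) * (1 + c*y) ^ (-(a+b))) := by
    refine setIntegral_congr_fun measurableSet_Ioo fun y hy => ?_
    have h0y : 0 < y := hy.1
    have h1y : 0 < 1 - y := by linarith [hy.2]
    have hnn : 0 ≤ C * y ^ (a-1) * (1-y) ^ (b-1) := by positivity
    rw [NNReal.smul_def, hρ_def]
    simp only
    rw [Real.coe_toNNReal _ hnn, smul_eq_mul]
    ring
  rw [this, integral_const_mul, beta_cov ha hb hc]
  rw [hC_def]
  field_simp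

/-- if `B` is Beta(a,b) distributed and `M` is a nonnegative random
variable independent of `B`, then for every `λ ≥ 0`,
`E[(1 + λ B M)^(-(a+b))] = E[(1 + λ M)^(-a)]`. -/
theorem beta_scaling_cauchy_stieltjes
    {Ω : Type*} [MeasurableSpace Ω] (P : Measure Ω) [IsProbabilityMeasure P]
    (a b : ℝ) (ha : 0 < a) (hb : 0 < b)
    (B M : Ω → ℝ) (hBmeas : Measurable B) (hMmeas : Measurable M)
    (hB : Measure.map B P = _root_.betaMeasure a b)
    (hMnonneg : ∀ᵐ ω ∂P, 0 ≤ M ω)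
    (hindep : IndepFun B M P) :
    ∀ l : ℝ, 0 ≤ l →
      ∫ ω, (1 + l * (B ω * M ω)) ^ (-(a + b)) ∂P
        = ∫ ω, (1 + l * M ω) ^ (-a) ∂P := by
  intro l hl
  have hBae : AEMeasurable B P := hBmeas.aemeasurable
  have hMae : AEMeasurable M P := hMmeas.aemeasurable
  have hbeta_prob : IsProbabilityMeasure (_root_.betaMeasure a b) := by
    rw [← hB]; exact Measure.isProbabilityMeasure_map hBae
  have hν_prob : IsProbabilityMeasure (P.map M) := Measure.isProbabilityMeasure_map hMae
  have hprod : P.map (fun ω => (B ω, M ω)) = (_root_.betaMeasure a b).prod (P.map M) := by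
    rw [← hB]
    exact (indepFun_iff_map_prod_eq_prod_map_map hBae hMae).mp hindep
  set F : ℝ × ℝ → ℝ := fun p => (1 + l * (p.1 * p.2)) ^ (-(a+b)) with hF_def
  have hFmeas : Measurable F :=
    (measurable_const.add ((measurable_fst.mul measurable_snd).const_mul l)).pow measurable_const
  have h1 : ∀ᵐ y ∂(_root_.betaMeasure a b), y ∈ Set.Ioo (0:ℝ) 1 := by
    have h0 : ∀ᵐ y ∂(volume.restrict (Set.Ioo (0:ℝ) 1)), y ∈ Set.Ioo (0:ℝ) 1 :=
      ae_restrict_mem measurableSet_Ioo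
    exact h0.filter_mono (withDensity_absolutelyContinuous _ _).ae_le
  have h2 : ∀ᵐ m ∂(P.map M), 0 ≤ m := (ae_map_iff hMae measurableSet_Ici).mpr hMnonneg
  have hprod_ae : ∀ᵐ p ∂((_root_.betaMeasure a b).prod (P.map M)),
      p.1 ∈ Set.Ioo (0:ℝ) 1 ∧ 0 ≤ p.2 :=
    ((Measure.quasiMeasurePreserving_fst).ae h1).and
      ((Measure.quasiMeasurePreserving_snd).ae h2)
  have hbound : ∀ᵐ p ∂((_root_.betaMeasure a b).prod (P.map M)), ‖F p‖ ≤ 1 := by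
    filter_upwards [hprod_ae] with p hp
    have h1p : (1:ℝ) ≤ 1 + l * (p.1 * p.2) := by
      have := mul_nonneg hl (mul_nonneg hp.1.1.le hp.2)
      linarith
    rw [hF_def]
    simp only
    rw [Real.norm_eq_abs, abs_of_nonneg (Real.rpow_nonneg (by linarith) _)]
    exact Real.rpow_le_one_of_one_le_of_nonpos h1p (by linarith)
  have hFint : Integrable F ((_root_.betaMeasure a b).prod (P.map M)) :=
    (integrable_const 1).mono' hFmeas.aestronglyMeasurable hbound
  calc ∫ ω, (1 + l * (B ω * M ω)) ^ (-(a + b)) ∂P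
      = ∫ p, F p ∂(P.map (fun ω => (B ω, M ω))) :=
        (integral_map (hBmeas.prodMk hMmeas).aemeasurable
          hFmeas.aestronglyMeasurable).symm
    _ = ∫ p, F p ∂((_root_.betaMeasure a b).prod (P.map M)) := by rw [hprod]
    _ = ∫ m, ∫ y, F (y, m) ∂(_root_.betaMeasure a b) ∂(P.map M) := integral_prod_symm F hFint
    _ = ∫ m, (1 + l * m) ^ (-a) ∂(P.map M) := by
        refine integral_congr_ae ?_
        filter_upwards [h2] with m hm
        have heq : (fun y => F (y, m)) = fun y => (1 + (l*m) * y) ^ (-(a+b)) := by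
          funext y
          rw [hF_def]
          simp only
          congr 1
          ring
        rw [heq, beta_transform ha hb (mul_nonneg hl hm)]
    _ = ∫ ω, (1 + l * M ω) ^ (-a) ∂P :=
        integral_map hMae ((measurable_const.add
          (measurable_id.const_mul l)).pow measurable_const).aestronglyMeasurable
end

section
/- Let θ > 0 and c > 0. Let M be a positive random variable with Lebesgue density ξ on (0,∞), let G be a random variable with the Gamma(θ,1) distribution independent of M, and let T = G·M, so that T has density g(t) = (t^{θ-1}/Γ(θ)) ∫₀^∞ e^{-t/m} m^{-θ} ξ(m) dm. Set K = E[(1+cM)^{-θ}], and assume 0 < K < ∞. Then E[e^{-cT}] = K, the function t ↦ e^{-t} g(t/c)/(cK) on (0,∞) is a probability density, and it is the density of the random variable G·(cM′/(1+cM′)), where M′ is a random variable with density m ↦ (1+cm)^{-θ} ξ(m)/K on (0,∞), independent of G. (Exponential tilting of a gamma scale mixture, Theorem 3.1.) -/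
open MeasureTheory ProbabilityTheory

section AuxiliaryLemmas
open scoped ENNReal NNReal
open Set

lemma aux_integrableOn_rpow_exp {a r : ℝ} (ha : 0 < a) (hr : 0 < r) :
    IntegrableOn (fun t : ℝ => t ^ (a-1) * Real.exp (-(r*t))) (Ioi 0) := by
  have h0 : IntegrableOn (fun x : ℝ => Real.exp (-x) * x ^ (a-1)) (Ioi 0) :=
    Real.GammaIntegral_convergent ha
  have h1 : IntegrableOn (fun t : ℝ => Real.exp (-(r*t)) * (r*t) ^ (a-1)) (Ioi 0) := by
    have := (integrableOn_Ioi_comp_mul_left_iff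
      (fun x : ℝ => Real.exp (-x) * x ^ (a-1)) 0 hr).2 (by simpa using h0)
    simpa using this
  have h2 := h1.const_mul (r ^ (1-a))
  refine MeasureTheory.IntegrableOn.congr_fun h2 (fun t ht => ?_) measurableSet_Ioi
  have ht : (0:ℝ) < t := ht
  rw [Real.mul_rpow hr.le ht.le,
    show r ^ (1-a) * (Real.exp (-(r*t)) * (r^(a-1) * t^(a-1)))
      = (r^(1-a)*r^(a-1)) * (t^(a-1)*Real.exp (-(r*t))) by ring,
    ← Real.rpow_add hr]
  norm_num

lemma aux_gamma_lintegral {a r : ℝ} (ha : 0 < a) (hr : 0 < r) :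
    ∫⁻ t in Set.Ioi (0:ℝ), ENNReal.ofReal (t ^ (a-1) * Real.exp (-(r*t))) =
      ENNReal.ofReal ((1/r) ^ a * Real.Gamma a) := by
  rw [← Real.integral_rpow_mul_exp_neg_mul_Ioi ha hr]
  rw [MeasureTheory.ofReal_integral_eq_lintegral_ofReal (aux_integrableOn_rpow_exp ha hr) ?_]
  filter_upwards [self_mem_ae_restrict (measurableSet_Ioi : MeasurableSet (Ioi (0:ℝ)))]
    with t ht
  have : (0:ℝ) < t := ht
  positivity


lemma aux_pow_le_exp {x : ℝ} (hx : 0 ≤ x) (n : ℕ) : x ^ n / n.factorial ≤ Real.exp x := by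
  refine le_trans ?_ (Real.sum_le_exp_of_nonneg hx (n+1))
  have := Finset.single_le_sum (f := fun i => x ^ i / (i.factorial : ℝ))
    (fun i _ => by positivity) (Finset.self_mem_range_succ n)
  simpa using this

lemma aux_bound {θ s m : ℝ} (hθ : 0 < θ) (hs : 0 < s) (hm : 0 < m) :
    Real.exp (-s/m) * m ^ (-θ) ≤ max 1 ((Nat.ceil θ).factorial / s ^ (Nat.ceil θ)) := by
  rcases le_or_gt 1 m with h1 | h1
  · refine le_trans ?_ (le_max_left _ _)
    have h2 : m ^ (-θ) ≤ 1 := Real.rpow_le_one_of_one_le_of_nonpos h1 (by linarith)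
    have h3 : Real.exp (-s/m) ≤ 1 := Real.exp_le_one_iff.2 (by
      rw [neg_div]; simp only [Left.neg_nonpos_iff]; positivity)
    nlinarith [Real.exp_pos (-s/m), Real.rpow_nonneg hm.le (-θ)]
  · refine le_trans ?_ (le_max_right _ _)
    set n := Nat.ceil θ with hn
    have hθn : θ ≤ (n : ℝ) := Nat.le_ceil θ
    have h2 : m ^ (-θ) ≤ m ^ (-(n:ℝ)) :=
      Real.rpow_le_rpow_of_exponent_ge hm h1.le (by linarith)
    have h3 : m ^ (-(n:ℝ)) = (s/m) ^ n / s ^ n := by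
      rw [div_pow, Real.rpow_neg hm.le, Real.rpow_natCast]
      field_simp
    have h4 : Real.exp (-s/m) * ((s/m) ^ n / s ^ n) ≤ (n.factorial : ℝ) / s ^ n := by
      rw [neg_div, Real.exp_neg]
      have h5 : (s/m) ^ n / (n.factorial : ℝ) ≤ Real.exp (s/m) :=
        aux_pow_le_exp (by positivity) n
      rw [div_le_iff₀ (by positivity : (0:ℝ) < (n.factorial : ℝ))] at h5
      rw [show (Real.exp (s/m))⁻¹ * ((s/m)^n / s^n) = ((s/m)^n / Real.exp (s/m)) / s^n by ring]
      gcongr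
      rw [div_le_iff₀ (Real.exp_pos _)]
      linarith
    rw [h3] at h2
    calc Real.exp (-s/m) * m ^ (-θ) ≤ Real.exp (-s/m) * ((s/m)^n / s^n) :=
          mul_le_mul_of_nonneg_left h2 (Real.exp_pos _).le
      _ ≤ _ := h4


lemma aux_meas {θ s : ℝ} {ξ : ℝ → ℝ} (hξmeas : Measurable ξ) :
    Measurable (fun m : ℝ => Real.exp (-s/m) * m ^ (-θ) * ξ m) := by
  fun_prop

lemma aux_meas2 {θ : ℝ} {ξ : ℝ → ℝ} (hξmeas : Measurable ξ) :
    Measurable (fun p : ℝ × ℝ => Real.exp (-p.1/p.2) * p.2 ^ (-θ) * ξ p.2) := by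
  fun_prop

lemma aux_tilt_integrable {θ s : ℝ} {ξ : ℝ → ℝ} (hθ : 0 < θ) (hs : 0 < s)
    (hξmeas : Measurable ξ) (hξnonneg : ∀ m, 0 ≤ ξ m)
    (hξint : IntegrableOn ξ (Ioi 0)) :
    IntegrableOn (fun m : ℝ => Real.exp (-s/m) * m ^ (-θ) * ξ m) (Ioi 0) := by
  set C := max 1 (((Nat.ceil θ).factorial : ℝ) / s ^ (Nat.ceil θ)) with hC
  refine Integrable.mono' (hξint.const_mul C)
    (aux_meas (θ := θ) (s := s) hξmeas).aestronglyMeasurable.restrict ?_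
  filter_upwards [self_mem_ae_restrict (measurableSet_Ioi : MeasurableSet (Ioi (0:ℝ)))]
    with m hm
  have hm : (0:ℝ) < m := hm
  have hb := aux_bound hθ hs hm
  have h0 : 0 ≤ Real.exp (-s/m) * m ^ (-θ) * ξ m :=
    mul_nonneg (by positivity) (hξnonneg m)
  rw [Real.norm_eq_abs, abs_of_nonneg h0]
  exact mul_le_mul_of_nonneg_right hb (hξnonneg m)

lemma aux_tilt_ofReal {θ s : ℝ} {ξ : ℝ → ℝ} (hθ : 0 < θ) (hs : 0 < s)
    (hξmeas : Measurable ξ) (hξnonneg : ∀ m, 0 ≤ ξ m)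
    (hξint : IntegrableOn ξ (Ioi 0)) :
    ENNReal.ofReal (∫ m in Ioi 0, Real.exp (-s/m) * m ^ (-θ) * ξ m)
      = ∫⁻ m in Ioi 0, ENNReal.ofReal (Real.exp (-s/m) * m ^ (-θ) * ξ m) := by
  refine ofReal_integral_eq_lintegral_ofReal
    (aux_tilt_integrable hθ hs hξmeas hξnonneg hξint) ?_
  filter_upwards [self_mem_ae_restrict (measurableSet_Ioi : MeasurableSet (Ioi (0:ℝ)))]
    with m hm
  have hm : (0:ℝ) < m := hm
  exact mul_nonneg (mul_nonneg (Real.exp_pos _).le (Real.rpow_nonneg hm.le _)) (hξnonneg m)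


lemma aux_split {a r : ℝ} (h : ℝ → ℝ≥0∞) :
    ∫⁻ x, gammaPDF a r x * h x = ∫⁻ x in Ioi (0:ℝ), gammaPDF a r x * h x := by
  rw [← lintegral_add_compl (fun x => gammaPDF a r x * h x)
    (measurableSet_Ioi : MeasurableSet (Ioi (0:ℝ))), compl_Ioi,
    Measure.restrict_congr_set (Iio_ae_eq_Iic (a := (0:ℝ))).symm]
  have : ∫⁻ x in Iio (0:ℝ), gammaPDF a r x * h x = 0 := by
    rw [setLIntegral_congr_fun measurableSet_Iio
      (fun x (hx : x < 0) => by rw [gammaPDF_of_neg hx, zero_mul])]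
    simp
  rw [this, add_zero]

lemma aux_pdf_total {a r : ℝ} (ha : 0 < a) (hr : 0 < r) :
    ∫⁻ x in Ioi (0:ℝ), gammaPDF a r x = 1 := by
  have h := aux_split (a := a) (r := r) (fun _ => 1)
  simp only [mul_one] at h
  rw [← h, lintegral_gammaPDF_eq_one ha hr]

lemma aux_gamma_exp {θ b : ℝ} (hθ : 0 < θ) (hb : 0 ≤ b) :
    ∫⁻ x, ENNReal.ofReal (Real.exp (-(b*x))) ∂(gammaMeasure θ 1)
      = ENNReal.ofReal ((1+b) ^ (-θ)) := by
  have hΓ : (0:ℝ) < Real.Gamma θ := Real.Gamma_pos_of_pos hθ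
  have hpm : Measurable (gammaPDF θ 1) := (measurable_gammaPDFReal θ 1).ennreal_ofReal
  rw [gammaMeasure, lintegral_withDensity_eq_lintegral_mul _ hpm (by fun_prop)]
  have h1 : ∀ x ∈ Ioi (0:ℝ), gammaPDF θ 1 x * ENNReal.ofReal (Real.exp (-(b*x)))
      = ENNReal.ofReal (1 / Real.Gamma θ) * ENNReal.ofReal (x ^ (θ-1) * Real.exp (-((1+b)*x))) := by
    intro x hx
    have hx : (0:ℝ) < x := hx
    rw [gammaPDF_of_nonneg hx.le, ← ENNReal.ofReal_mul (by positivity),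
      ← ENNReal.ofReal_mul (by positivity)]
    congr 1
    rw [Real.one_rpow, mul_assoc, ← Real.exp_add]
    ring_nf
  simp_rw [Pi.mul_apply]
  calc ∫⁻ x, gammaPDF θ 1 x * ENNReal.ofReal (Real.exp (-(b*x)))
      = ∫⁻ x in Ioi (0:ℝ), gammaPDF θ 1 x * ENNReal.ofReal (Real.exp (-(b*x))) :=
        aux_split _
    _ = ∫⁻ x in Ioi (0:ℝ), ENNReal.ofReal (1 / Real.Gamma θ)
          * ENNReal.ofReal (x ^ (θ-1) * Real.exp (-((1+b)*x))) :=
        setLIntegral_congr_fun measurableSet_Ioi h1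
    _ = ENNReal.ofReal (1 / Real.Gamma θ)
          * ∫⁻ x in Ioi (0:ℝ), ENNReal.ofReal (x ^ (θ-1) * Real.exp (-((1+b)*x))) := by
        rw [lintegral_const_mul _ (by fun_prop)]
    _ = ENNReal.ofReal (1 / Real.Gamma θ) * ENNReal.ofReal ((1/(1+b)) ^ θ * Real.Gamma θ) := by
        rw [aux_gamma_lintegral hθ (by linarith)]
    _ = ENNReal.ofReal ((1+b) ^ (-θ)) := by
        rw [← ENNReal.ofReal_mul (by positivity)]
        congr 1
        rw [show (1:ℝ)/(1+b) = (1+b)⁻¹ from one_div _, Real.inv_rpow (by linarith),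
          ← Real.rpow_neg (by linarith)]
        field_simp
lemma aux_pdf_scale {θ : ℝ} {s : ℝ} (hs : 0 < s) (x : ℝ) :
    gammaPDF θ 1 x = ENNReal.ofReal s * gammaPDF θ (1/s) (x * s) := by
  rcases le_or_gt 0 x with hx | hx
  · rw [gammaPDF_of_nonneg hx, gammaPDF_of_nonneg (by positivity),
      ← ENNReal.ofReal_mul hs.le]
    congr 1
    have hss : s * s^(-θ) * s^(θ-1) = 1 := by
      nth_rewrite 1 [← Real.rpow_one s]
      rw [← Real.rpow_add hs, ← Real.rpow_add hs, show (1:ℝ) + -θ + (θ-1) = 0 by ring,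
        Real.rpow_zero]
    rw [Real.one_rpow, show (1:ℝ)/s = s⁻¹ from one_div s, Real.inv_rpow hs.le, ← Real.rpow_neg hs.le,
      Real.mul_rpow hx hs.le, show s⁻¹ * (x*s) = x by field_simp,
      show (1:ℝ)*x = x from one_mul x]
    calc 1/Real.Gamma θ * x^(θ-1) * Real.exp (-x)
        = (s * s^(-θ) * s^(θ-1)) * (x^(θ-1) * Real.exp (-x) / Real.Gamma θ) := by
          rw [hss]; ring
      _ = s * (s^(-θ)/Real.Gamma θ * (x^(θ-1) * s^(θ-1)) * Real.exp (-x)) := by ring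
  · rw [gammaPDF_of_neg hx, gammaPDF_of_neg (by nlinarith), mul_zero]

lemma aux_gamma_scale {θ : ℝ} {s : ℝ} (hs : 0 < s) {A : Set ℝ} (hA : MeasurableSet A) :
    gammaMeasure θ 1 ((fun x => x * s) ⁻¹' A) = ∫⁻ t in A, gammaPDF θ (1/s) t := by
  have hpdf' : Measurable (gammaPDF θ (1/s)) := (measurable_gammaPDFReal θ (1/s)).ennreal_ofReal
  rw [gammaMeasure, withDensity_apply _ (hA.preimage (measurable_mul_const s)),
    ← lintegral_indicator (hA.preimage (measurable_mul_const s))]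
  have h1 : ((fun x : ℝ => x * s) ⁻¹' A).indicator (gammaPDF θ 1)
      = fun x => A.indicator (fun y => ENNReal.ofReal s * gammaPDF θ (1/s) y) (x * s) := by
    rw [Set.indicator_congr (fun y (_ : y ∈ _) => aux_pdf_scale hs y)]
    funext x
    exact Set.indicator_comp_right (fun x : ℝ => x * s)
      (g := fun y => ENNReal.ofReal s * gammaPDF θ (1/s) y) (x := x)
  rw [h1]
  have hmeasind : Measurable (A.indicator (fun y => ENNReal.ofReal s * gammaPDF θ (1/s) y)) :=
    (hpdf'.const_mul _).indicator hA
  rw [show (fun x => A.indicator (fun y => ENNReal.ofReal s * gammaPDF θ (1/s) y) (x * s))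
      = fun x => A.indicator (fun y => ENNReal.ofReal s * gammaPDF θ (1/s) y)
          ((fun x : ℝ => x * s) x) from rfl,
    ← lintegral_map hmeasind (measurable_mul_const s),
    Real.map_volume_mul_right (ne_of_gt hs), lintegral_smul_measure,
    lintegral_indicator hA, lintegral_const_mul _ hpdf', smul_eq_mul, ← mul_assoc,
    ← ENNReal.ofReal_mul (by positivity), abs_of_pos (by positivity),
    inv_mul_cancel₀ (ne_of_gt hs), ENNReal.ofReal_one, one_mul]

lemma aux_real_id {θ c K t m : ℝ} (hθ : 0 < θ) (hc : 0 < c) (hK : 0 < K)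
    (ht : 0 < t) (hm : 0 < m) (ξm : ℝ) :
    Real.exp (-t) * (t/c) ^ (θ-1) / Real.Gamma θ / (c*K) * (Real.exp (-(t/c)/m) * m ^ (-θ) * ξm)
      = (1+c*m) ^ (-θ) * ξm / K *
        (((1+c*m)/(c*m)) ^ θ / Real.Gamma θ * t ^ (θ-1) * Real.exp (-((1+c*m)/(c*m)*t))) := by
  have hcm : 0 < c*m := by positivity
  have hΓ : 0 < Real.Gamma θ := Real.Gamma_pos_of_pos hθ
  have h1 : (t/c)^(θ-1) = t^(θ-1)/c^(θ-1) := Real.div_rpow ht.le hc.le _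
  have h2 : ((1+c*m)/(c*m))^θ = (1+c*m)^θ/(c*m)^θ := Real.div_rpow (by positivity) hcm.le _
  have h3 : (1+c*m)^(-θ) = ((1+c*m)^θ)⁻¹ := Real.rpow_neg (by positivity) _
  have h4 : m^(-θ) = (m^θ)⁻¹ := Real.rpow_neg hm.le _
  have h5 : (c*m)^θ = c^θ * m^θ := Real.mul_rpow hc.le hm.le
  have h6 : c^(θ-1) * c = c^θ := by
    nth_rewrite 2 [← Real.rpow_one c]
    rw [← Real.rpow_add hc]
    norm_num
  have h7 : Real.exp (-t) * Real.exp (-(t/c)/m) = Real.exp (-((1+c*m)/(c*m)*t)) := by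
    rw [← Real.exp_add]
    congr 1
    field_simp
    ring
  have hp1 : (0:ℝ) < (1+c*m)^θ := Real.rpow_pos_of_pos (by positivity) _
  have hp2 : (0:ℝ) < m^θ := Real.rpow_pos_of_pos hm _
  have hp3 : (0:ℝ) < c^(θ-1) := Real.rpow_pos_of_pos hc _
  rw [h1, h2, h3, h4, h5, ← h6, ← h7]
  field_simp

lemma aux_density_eq {θ c K : ℝ} {ξ : ℝ → ℝ} (hθ : 0 < θ) (hc : 0 < c) (hK : 0 < K)
    (hξmeas : Measurable ξ) (hξnonneg : ∀ m, 0 ≤ ξ m) (hξint : IntegrableOn ξ (Ioi 0))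
    {t : ℝ} (ht : 0 < t) :
    ∫⁻ m in Ioi (0:ℝ), ENNReal.ofReal ((1+c*m) ^ (-θ) * ξ m / K)
        * gammaPDF θ ((1+c*m)/(c*m)) t
      = ENNReal.ofReal (Real.exp (-t) * ((t/c) ^ (θ-1) / Real.Gamma θ *
          ∫ m in Ioi (0:ℝ), Real.exp (-(t/c)/m) * m ^ (-θ) * ξ m) / (c*K)) := by
  have htc : 0 < t/c := by positivity
  have hΓ : 0 < Real.Gamma θ := Real.Gamma_pos_of_pos hθ
  have hI : 0 ≤ ∫ m in Ioi (0:ℝ), Real.exp (-(t/c)/m) * m ^ (-θ) * ξ m :=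
    setIntegral_nonneg measurableSet_Ioi fun m hm =>
      mul_nonneg (mul_nonneg (Real.exp_pos _).le (Real.rpow_nonneg (le_of_lt hm) _)) (hξnonneg m)
  have hD : 0 ≤ Real.exp (-t) * (t/c)^(θ-1)/Real.Gamma θ/(c*K) :=
    div_nonneg (div_nonneg (mul_nonneg (Real.exp_pos _).le (Real.rpow_nonneg htc.le _)) hΓ.le)
      (mul_pos hc hK).le
  rw [show Real.exp (-t) * ((t/c) ^ (θ-1) / Real.Gamma θ *
        ∫ m in Ioi (0:ℝ), Real.exp (-(t/c)/m) * m ^ (-θ) * ξ m) / (c*K)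
      = (Real.exp (-t) * (t/c)^(θ-1)/Real.Gamma θ/(c*K)) *
        ∫ m in Ioi (0:ℝ), Real.exp (-(t/c)/m) * m ^ (-θ) * ξ m by ring,
    ENNReal.ofReal_mul hD, aux_tilt_ofReal hθ htc hξmeas hξnonneg hξint,
    ← lintegral_const_mul _ (by fun_prop :
      Measurable fun m : ℝ => ENNReal.ofReal (Real.exp (-(t/c)/m) * m ^ (-θ) * ξ m))]
  refine setLIntegral_congr_fun measurableSet_Ioi (fun m hm => ?_)
  have hm : (0:ℝ) < m := hm
  have hρ : 0 ≤ (1+c*m) ^ (-θ) * ξ m / K :=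
    div_nonneg (mul_nonneg (Real.rpow_nonneg (by positivity) _) (hξnonneg m)) hK.le
  rw [gammaPDF_of_nonneg ht.le, ← ENNReal.ofReal_mul hρ, ← ENNReal.ofReal_mul hD]
  congr 1
  exact (aux_real_id hθ hc hK ht hm (ξ m)).symm

end AuxiliaryLemmas


/-- Theorem 3.1, exponential tilting of a gamma scale mixture:
with `M` positive with density `ξ` on `(0,∞)`, `G ~ Gamma(θ,1)` independent of `M`,
`T = G·M` with density `g(t) = (t^(θ-1)/Γ(θ)) ∫₀^∞ e^{-t/m} m^{-θ} ξ(m) dm`,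
and `K = E[(1+cM)^{-θ}] ∈ (0,∞)`: one has `E[e^{-cT}] = K`, the function
`t ↦ e^{-t} g(t/c)/(cK)` is a probability density on `(0,∞)`, and it is the density
of `G·(cM′/(1+cM′))` where `M′` has density `m ↦ (1+cm)^{-θ} ξ(m)/K`, independent of `G`. -/
theorem exponential_tilting_gamma_scale_mixture
    {Ω : Type*} [MeasurableSpace Ω] (P : Measure Ω) [IsProbabilityMeasure P]
    (θ c : ℝ) (hθ : 0 < θ) (hc : 0 < c)
    (ξ : ℝ → ℝ) (hξmeas : Measurable ξ) (hξnonneg : ∀ m, 0 ≤ ξ m)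
    (M G M' : Ω → ℝ)
    (hMmeas : Measurable M) (hGmeas : Measurable G) (hM'meas : Measurable M')
    (hM : Measure.map M P
      = (volume.restrict (Set.Ioi (0:ℝ))).withDensity fun m => ENNReal.ofReal (ξ m))
    (hG : Measure.map G P = gammaMeasure θ 1)
    (hGM : IndepFun G M P)
    (K : ℝ) (hKdef : K = ∫ ω, (1 + c * M ω) ^ (-θ) ∂P) (hKpos : 0 < K)
    (hM' : Measure.map M' P
      = (volume.restrict (Set.Ioi (0:ℝ))).withDensity fun m =>
          ENNReal.ofReal ((1 + c * m) ^ (-θ) * ξ m / K))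
    (hGM' : IndepFun G M' P)
    (g : ℝ → ℝ)
    (hg : ∀ t, g t = t ^ (θ - 1) / Real.Gamma θ *
        ∫ m in Set.Ioi (0:ℝ), Real.exp (-t / m) * m ^ (-θ) * ξ m) :
    (∫ ω, Real.exp (-(c * (G ω * M ω))) ∂P = K) ∧
    (∀ t ∈ Set.Ioi (0:ℝ), 0 ≤ Real.exp (-t) * g (t / c) / (c * K)) ∧
    (∫ t in Set.Ioi (0:ℝ), Real.exp (-t) * g (t / c) / (c * K) = 1) ∧
    (Measure.map (fun ω => G ω * (c * M' ω / (1 + c * M' ω))) P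
      = (volume.restrict (Set.Ioi (0:ℝ))).withDensity fun t =>
          ENNReal.ofReal (Real.exp (-t) * g (t / c) / (c * K))) := by
  have hΓ : 0 < Real.Gamma θ := Real.Gamma_pos_of_pos hθ
  haveI : IsProbabilityMeasure (gammaMeasure θ 1) := isProbabilityMeasure_gammaMeasure hθ one_pos
  -- ξ is integrable on (0,∞)
  have hξone : ∫⁻ m in Set.Ioi (0:ℝ), ENNReal.ofReal (ξ m) = 1 := by
    haveI := Measure.isProbabilityMeasure_map (μ := P) hMmeas.aemeasurable
    have h := measure_univ (μ := Measure.map M P)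
    rwa [hM, withDensity_apply _ MeasurableSet.univ, Measure.restrict_univ] at h
  have hξint : IntegrableOn ξ (Set.Ioi 0) :=
    ⟨hξmeas.aestronglyMeasurable,
      (hasFiniteIntegral_iff_ofReal (ae_of_all _ hξnonneg)).2
        (by rw [hξone]; exact ENNReal.one_lt_top)⟩
  -- a.e. positivity of M
  have hMae : ∀ᵐ ω ∂P, 0 < M ω := by
    have h0 : Measure.map M P (Set.Ioi 0)ᶜ = 0 := by
      rw [hM, withDensity_apply _ measurableSet_Ioi.compl,
        Measure.restrict_restrict measurableSet_Ioi.compl, Set.compl_inter_self]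
      simp
    rw [Measure.map_apply hMmeas measurableSet_Ioi.compl] at h0
    rw [ae_iff]
    have he : {ω | ¬ 0 < M ω} = M ⁻¹' (Set.Ioi 0)ᶜ := by ext ω; simp
    rw [he]; exact h0
  -- K as a lintegral
  have hint1 : Integrable (fun ω => (1 + c * M ω) ^ (-θ)) P := by
    refine Integrable.mono' (integrable_const (1:ℝ))
      ((by fun_prop : Measurable fun ω => (1 + c * M ω) ^ (-θ)).aestronglyMeasurable) ?_
    filter_upwards [hMae] with ω hω
    rw [Real.norm_eq_abs, abs_of_nonneg (Real.rpow_nonneg (by positivity) _)]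
    exact Real.rpow_le_one_of_one_le_of_nonpos (by nlinarith) (by linarith)
  have hKP : ∫⁻ ω, ENNReal.ofReal ((1 + c * M ω) ^ (-θ)) ∂P = ENNReal.ofReal K := by
    rw [hKdef]
    refine (ofReal_integral_eq_lintegral_ofReal hint1 ?_).symm
    filter_upwards [hMae] with ω hω
    exact Real.rpow_nonneg (by positivity) _
  have hKν : ∫⁻ m in Set.Ioi (0:ℝ), ENNReal.ofReal ((1 + c * m) ^ (-θ) * ξ m)
      = ENNReal.ofReal K := by
    have e1 : ∫⁻ x, ENNReal.ofReal ((1 + c * x) ^ (-θ)) ∂(Measure.map M P)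
        = ENNReal.ofReal K := by
      rw [lintegral_map (by fun_prop) hMmeas]; exact hKP
    rw [hM, lintegral_withDensity_eq_lintegral_mul _ (by fun_prop) (by fun_prop)] at e1
    rw [← e1]
    simp_rw [Pi.mul_apply]
    refine setLIntegral_congr_fun measurableSet_Ioi (fun m hm => ?_)
    have hm : (0:ℝ) < m := hm
    rw [← ENNReal.ofReal_mul (hξnonneg m), mul_comm (ξ m)]
  -- PART 1
  have part1 : ∫ ω, Real.exp (-(c * (G ω * M ω))) ∂P = K := by
    rw [integral_eq_lintegral_of_nonneg_ae (ae_of_all _ fun ω => (Real.exp_pos _).le)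
      ((by fun_prop : Measurable fun ω => Real.exp (-(c * (G ω * M ω)))).aestronglyMeasurable)]
    have hlin : ∫⁻ ω, ENNReal.ofReal (Real.exp (-(c * (G ω * M ω)))) ∂P
        = ENNReal.ofReal K := by
      have hmap : ∫⁻ ω, ENNReal.ofReal (Real.exp (-(c * (G ω * M ω)))) ∂P
          = ∫⁻ p : ℝ × ℝ, ENNReal.ofReal (Real.exp (-(c * (p.1 * p.2))))
              ∂((gammaMeasure θ 1).prod (Measure.map M P)) := by
        rw [← hG, ← (indepFun_iff_map_prod_eq_prod_map_map hGmeas.aemeasurable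
            hMmeas.aemeasurable).1 hGM,
          lintegral_map (by fun_prop) (hGmeas.prodMk hMmeas)]
      rw [hmap, lintegral_prod_symm' _ (by fun_prop), hM,
        lintegral_withDensity_eq_lintegral_mul_non_measurable _ (by fun_prop)
          (ae_of_all _ fun m => ENNReal.ofReal_lt_top), ← hKν]
      simp_rw [Pi.mul_apply]
      refine setLIntegral_congr_fun measurableSet_Ioi (fun m hm => ?_)
      have hm : (0:ℝ) < m := hm
      have e2 : ∫⁻ x, ENNReal.ofReal (Real.exp (-(c * (x * m)))) ∂(gammaMeasure θ 1)
          = ENNReal.ofReal ((1 + c * m) ^ (-θ)) := by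
        rw [show (fun x : ℝ => ENNReal.ofReal (Real.exp (-(c * (x * m)))))
            = fun x : ℝ => ENNReal.ofReal (Real.exp (-((c * m) * x))) by
          funext x; ring_nf]
        exact aux_gamma_exp hθ (by positivity)
      rw [e2, ← ENNReal.ofReal_mul (hξnonneg m), mul_comm (ξ m)]
    rw [hlin, ENNReal.toReal_ofReal hKpos.le]
  -- PART 2
  have part2 : ∀ t ∈ Set.Ioi (0:ℝ), 0 ≤ Real.exp (-t) * g (t / c) / (c * K) := by
    intro t ht
    have ht : (0:ℝ) < t := ht
    have hgc : 0 ≤ g (t / c) := by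
      rw [hg]
      refine mul_nonneg (div_nonneg (Real.rpow_nonneg (by positivity) _) hΓ.le) ?_
      exact setIntegral_nonneg measurableSet_Ioi fun m hm =>
        mul_nonneg (mul_nonneg (Real.exp_pos _).le
          (Real.rpow_nonneg (le_of_lt hm) _)) (hξnonneg m)
    exact div_nonneg (mul_nonneg (Real.exp_pos _).le hgc) (mul_pos hc hKpos).le
  -- measurability of the joint pdf kernel
  have hpdfmr : ∀ r : ℝ, Measurable (gammaPDF θ r) := fun r =>
    (measurable_gammaPDFReal θ r).ennreal_ofReal
  have hpdfm : Measurable (fun p : ℝ × ℝ => gammaPDF θ ((1 + c * p.1) / (c * p.1)) p.2) := by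
    unfold gammaPDF gammaPDFReal
    refine ENNReal.measurable_ofReal.comp ?_
    refine Measurable.ite (measurableSet_le measurable_const measurable_snd) ?_ measurable_const
    fun_prop
  have hρm : Measurable (fun m : ℝ => ENNReal.ofReal ((1 + c * m) ^ (-θ) * ξ m / K)) := by
    fun_prop
  have hρnn : ∀ m : ℝ, 0 < m → 0 ≤ (1 + c * m) ^ (-θ) * ξ m / K := fun m hm =>
    div_nonneg (mul_nonneg (Real.rpow_nonneg (by positivity) _) (hξnonneg m)) hKpos.le
  -- the key pointwise identity for t > 0
  have hkey : ∀ t : ℝ, 0 < t →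
      ∫⁻ m in Set.Ioi (0:ℝ), ENNReal.ofReal ((1 + c * m) ^ (-θ) * ξ m / K)
          * gammaPDF θ ((1 + c * m) / (c * m)) t
        = ENNReal.ofReal (Real.exp (-t) * g (t / c) / (c * K)) := by
    intro t ht
    rw [hg (t/c)]
    exact aux_density_eq hθ hc hKpos hξmeas hξnonneg hξint ht
  -- PART 3
  have hρK : ∫⁻ m in Set.Ioi (0:ℝ), ENNReal.ofReal ((1 + c * m) ^ (-θ) * ξ m / K) = 1 := by
    have e3 : ∀ m : ℝ, ENNReal.ofReal ((1 + c * m) ^ (-θ) * ξ m / K)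
        = ENNReal.ofReal (1/K) * ENNReal.ofReal ((1 + c * m) ^ (-θ) * ξ m) := by
      intro m
      rw [← ENNReal.ofReal_mul (by positivity)]
      congr 1
      ring
    simp_rw [e3]
    rw [lintegral_const_mul _ (by fun_prop), hKν, ← ENNReal.ofReal_mul (by positivity),
      one_div, inv_mul_cancel₀ hKpos.ne', ENNReal.ofReal_one]
  have part3 : ∫ t in Set.Ioi (0:ℝ), Real.exp (-t) * g (t / c) / (c * K) = 1 := by
    have hgm : Measurable g := by
      have hgfun : g = fun t => t ^ (θ - 1) / Real.Gamma θ *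
          ∫ m in Set.Ioi (0:ℝ), Real.exp (-t / m) * m ^ (-θ) * ξ m := funext hg
      rw [hgfun]
      refine Measurable.mul (by fun_prop) ?_
      have hsm : StronglyMeasurable (fun p : ℝ × ℝ =>
          Real.exp (-p.1 / p.2) * p.2 ^ (-θ) * ξ p.2) :=
        (aux_meas2 hξmeas).stronglyMeasurable
      exact hsm.integral_prod_right'.measurable
    rw [integral_eq_lintegral_of_nonneg_ae
      ((ae_restrict_iff' measurableSet_Ioi).2 (ae_of_all _ part2))
      ((by fun_prop : Measurable fun t =>
        Real.exp (-t) * g (t / c) / (c * K)).aestronglyMeasurable)]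
    have hlin : ∫⁻ t in Set.Ioi (0:ℝ), ENNReal.ofReal (Real.exp (-t) * g (t / c) / (c * K))
        = 1 := by
      rw [← setLIntegral_congr_fun measurableSet_Ioi
        (fun t (ht : t ∈ Set.Ioi (0:ℝ)) => hkey t ht)]
      rw [lintegral_lintegral_swap
        ((hρm.comp measurable_snd).mul (hpdfm.comp measurable_swap)).aemeasurable]
      have e4 : ∀ m ∈ Set.Ioi (0:ℝ),
          ∫⁻ t in Set.Ioi (0:ℝ), ENNReal.ofReal ((1 + c * m) ^ (-θ) * ξ m / K)
              * gammaPDF θ ((1 + c * m) / (c * m)) t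
            = ENNReal.ofReal ((1 + c * m) ^ (-θ) * ξ m / K) := by
        intro m hm
        have hm : (0:ℝ) < m := hm
        rw [lintegral_const_mul _ (hpdfmr _), aux_pdf_total hθ (by positivity), mul_one]
      rw [setLIntegral_congr_fun measurableSet_Ioi e4, hρK]
    rw [hlin, ENNReal.toReal_one]
  -- PART 4
  have part4 : Measure.map (fun ω => G ω * (c * M' ω / (1 + c * M' ω))) P
      = (volume.restrict (Set.Ioi (0:ℝ))).withDensity fun t =>
          ENNReal.ofReal (Real.exp (-t) * g (t / c) / (c * K)) := by
    have hφ : Measurable fun p : ℝ × ℝ => p.2 * (c * p.1 / (1 + c * p.1)) := by fun_prop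
    have hjoint' : Measure.map (fun ω => (M' ω, G ω)) P
        = (Measure.map M' P).prod (gammaMeasure θ 1) := by
      rw [← hG]
      exact (indepFun_iff_map_prod_eq_prod_map_map hM'meas.aemeasurable
        hGmeas.aemeasurable).1 hGM'.symm
    refine Measure.ext fun A hA => ?_
    have hcomp : (fun ω => G ω * (c * M' ω / (1 + c * M' ω)))
        = (fun p : ℝ × ℝ => p.2 * (c * p.1 / (1 + c * p.1))) ∘ (fun ω => (M' ω, G ω)) := rfl
    rw [hcomp, ← Measure.map_map hφ (hM'meas.prodMk hGmeas), hjoint', hM',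
      Measure.map_apply hφ hA, Measure.prod_apply (hφ hA),
      lintegral_withDensity_eq_lintegral_mul_non_measurable _ hρm
        (ae_of_all _ fun m => ENNReal.ofReal_lt_top)]
    simp_rw [Pi.mul_apply]
    have e5 : ∀ m ∈ Set.Ioi (0:ℝ),
        ENNReal.ofReal ((1 + c * m) ^ (-θ) * ξ m / K)
            * gammaMeasure θ 1 (Prod.mk m ⁻¹'
              ((fun p : ℝ × ℝ => p.2 * (c * p.1 / (1 + c * p.1))) ⁻¹' A))
          = ∫⁻ t in A, ENNReal.ofReal ((1 + c * m) ^ (-θ) * ξ m / K)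
              * gammaPDF θ ((1 + c * m) / (c * m)) t := by
      intro m hm
      have hm : (0:ℝ) < m := hm
      have hs : 0 < c * m / (1 + c * m) := by positivity
      have hpre : Prod.mk m ⁻¹' ((fun p : ℝ × ℝ => p.2 * (c * p.1 / (1 + c * p.1))) ⁻¹' A)
          = (fun x : ℝ => x * (c * m / (1 + c * m))) ⁻¹' A := rfl
      rw [hpre, aux_gamma_scale hs hA,
        show 1 / (c * m / (1 + c * m)) = (1 + c * m) / (c * m) by
          rw [one_div_div],
        lintegral_const_mul _ (hpdfmr _)]
    rw [setLIntegral_congr_fun measurableSet_Ioi e5]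
    rw [lintegral_lintegral_swap
      ((hρm.comp measurable_fst).mul hpdfm).aemeasurable]
    rw [withDensity_apply _ hA, Measure.restrict_restrict hA, Set.inter_comm,
      ← Measure.restrict_restrict measurableSet_Ioi,
      ← lintegral_indicator measurableSet_Ioi]
    refine lintegral_congr_ae ?_
    have hvol0 : ∀ᵐ t : ℝ ∂(volume : Measure ℝ), t ≠ 0 := by
      rw [ae_iff]
      simp only [ne_eq, not_not, Set.setOf_eq_eq_singleton]
      exact measure_singleton 0
    filter_upwards [ae_restrict_of_ae hvol0] with t ht0
    rcases ht0.lt_or_gt with h | h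
    · rw [setLIntegral_congr_fun measurableSet_Ioi
        (fun m (hm : m ∈ Set.Ioi (0:ℝ)) => by
          rw [gammaPDF_of_neg h, mul_zero]), lintegral_zero,
        Set.indicator_of_notMem (by simp only [Set.mem_Ioi, not_lt]; exact h.le)]
    · rw [hkey t h, Set.indicator_of_mem (show t ∈ Set.Ioi (0:ℝ) from h)]
  exact ⟨part1, part2, part3, part4⟩
end

section
/- Let W be a random variable with density (1+x)^{-2} on (0,∞), let c > 0 with c ≠ 1, and set A_c = cW/(cW+1). Then for every 0 < y < 1, E[log|y − A_c|] = (y/(c(1−y)+y))·log(y/(c(1−y))) − c·log(c)/(c−1) + log(c(1−y)). (The explicit formula for Φ_{F_{A_c}} in the Remark following Proposition 4.2.) -/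
open MeasureTheory ProbabilityTheory
open Real Filter Set Topology
open scoped NNReal ENNReal

lemma loglim : Tendsto (fun x : ℝ => Real.log x / x) atTop (𝓝 0) := by
  simpa using Real.tendsto_pow_log_div_mul_add_atTop 1 0 1 one_ne_zero

lemma lin_ratio (α β : ℝ) : Tendsto (fun x : ℝ => (α + β * x) / (1 + x)) atTop (𝓝 β) := by
  have h : Tendsto (fun x : ℝ => (α * x⁻¹ + β) / (x⁻¹ + 1)) atTop (𝓝 β) := by
    have h0 : Tendsto (fun x : ℝ => x⁻¹) atTop (𝓝 0) := tendsto_inv_atTop_zero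
    have := ((h0.const_mul α).add_const β).div (h0.add_const 1) (by norm_num)
    simpa [Pi.div_def] using this
  refine h.congr' ?_
  filter_upwards [eventually_gt_atTop (0:ℝ)] with x hx
  have hx' : x ≠ 0 := ne_of_gt hx
  field_simp

lemma loglin (γ cc : ℝ) (hc : 0 < cc) :
    Tendsto (fun x : ℝ => Real.log (γ + cc * x) / (1 + x)) atTop (𝓝 0) := by
  have h1 : Tendsto (fun x : ℝ => γ + cc * x) atTop atTop :=
    tendsto_atTop_add_const_left _ γ (tendsto_id.const_mul_atTop hc)
  have h2 := loglim.comp h1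
  have h3 := (h2.mul (lin_ratio γ cc))
  rw [zero_mul] at h3
  refine h3.congr' ?_
  filter_upwards [h1.eventually_gt_atTop 0] with x hx
  have : γ + cc * x ≠ 0 := ne_of_gt hx
  simp only [Function.comp]
  field_simp

lemma rho_deriv (x : ℝ) (hx : (1:ℝ) + x ≠ 0) :
    HasDerivAt (fun x : ℝ => -(1 + x)⁻¹) (((1 + x) ^ 2)⁻¹) x := by
  have h := (((hasDerivAt_id x).const_add 1).inv hx).neg
  refine h.congr_deriv ?_
  field_simp
  simp [hx]

lemma rho_lim : Tendsto (fun x : ℝ => -(1 + x)⁻¹) atTop (𝓝 0) := by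
  have h1 : Tendsto (fun x : ℝ => 1 + x) atTop atTop :=
    tendsto_atTop_add_const_left _ 1 tendsto_id
  have := (tendsto_inv_atTop_zero.comp h1).neg
  simpa using this

lemma rho_int : IntegrableOn (fun x : ℝ => ((1 + x) ^ 2)⁻¹) (Ioi 0) := by
  refine integrableOn_Ioi_deriv_of_nonneg' (a := 0) (g := fun x : ℝ => -(1 + x)⁻¹)
    (fun x hx => rho_deriv x (by simp only [mem_Ici] at hx; exact ne_of_gt (by linarith))) (fun x hx => by positivity) rho_lim

lemma rho_val : ∫ x in Ioi (0:ℝ), ((1 + x) ^ 2)⁻¹ = 1 := by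
  have := integral_Ioi_of_hasDerivAt_of_nonneg' (a := 0) (g := fun x : ℝ => -(1 + x)⁻¹)
    (fun x hx => rho_deriv x (by simp only [mem_Ici] at hx; exact ne_of_gt (by linarith))) (fun x hx => by positivity) rho_lim
  simpa using this

noncomputable def Fc (c : ℝ) (x : ℝ) : ℝ :=
  c / (c - 1) * (Real.log (1 + c * x) - Real.log (1 + x)) - Real.log (1 + c * x) / (1 + x)

lemma Fc_deriv (c : ℝ) (hc : 0 < c) (hc1 : c ≠ 1) (x : ℝ) (hx : 0 ≤ x) :
    HasDerivAt (Fc c) (Real.log (1 + c * x) * ((1 + x) ^ 2)⁻¹) x := by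
  have h1x : (1:ℝ) + x ≠ 0 := by linarith
  have h1cx : (1:ℝ) + c * x ≠ 0 := by nlinarith
  have hc1' : c - 1 ≠ 0 := sub_ne_zero.2 hc1
  have hcx : HasDerivAt (fun x : ℝ => 1 + c * x) c x := by
    simpa using ((hasDerivAt_id x).const_mul c).const_add 1
  have hlog1 : HasDerivAt (fun x : ℝ => Real.log (1 + c * x)) (c / (1 + c * x)) x :=
    hcx.log h1cx
  have h1 : HasDerivAt (fun x : ℝ => 1 + x) 1 x := by
    simpa using (hasDerivAt_id x).const_add 1
  have hlog2 : HasDerivAt (fun x : ℝ => Real.log (1 + x)) (1 / (1 + x)) x := h1.log h1x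
  have h := ((hlog1.sub hlog2).const_mul (c / (c - 1))).sub (hlog1.div h1 h1x)
  refine h.congr_deriv ?_
  have h2 : ((1:ℝ) + x) ^ 2 ≠ 0 := pow_ne_zero _ h1x
  field_simp
  ring

lemma Fc_lim (c : ℝ) (hc : 0 < c) :
    Tendsto (Fc c) atTop (𝓝 (c / (c - 1) * Real.log c)) := by
  have h1 : Tendsto (fun x : ℝ => Real.log ((1 + c * x) / (1 + x))) atTop (𝓝 (Real.log c)) :=
    (Real.continuousAt_log (ne_of_gt hc)).tendsto.comp (lin_ratio 1 c)
  have h2 := loglin 1 c hc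
  have h3 := ((h1.const_mul (c / (c - 1))).sub h2)
  rw [sub_zero] at h3
  refine h3.congr' ?_
  filter_upwards [eventually_gt_atTop (0:ℝ)] with x hx
  have h1x : (0:ℝ) < 1 + x := by linarith
  have h1cx : (0:ℝ) < 1 + c * x := by nlinarith
  unfold Fc
  rw [Real.log_div (ne_of_gt h1cx) (ne_of_gt h1x)]

lemma B_int (c : ℝ) (hc : 0 < c) (hc1 : c ≠ 1) :
    IntegrableOn (fun x : ℝ => Real.log (1 + c * x) * ((1 + x) ^ 2)⁻¹) (Ioi 0) :=
  integrableOn_Ioi_deriv_of_nonneg' (a := 0) (g := Fc c)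
    (fun x hx => Fc_deriv c hc hc1 x (by simpa using hx))
    (fun x hx => by
      have hx0 : (0:ℝ) < x := hx
      have : (0:ℝ) ≤ Real.log (1 + c * x) := Real.log_nonneg (by nlinarith)
      positivity)
    (Fc_lim c hc)

lemma B_val (c : ℝ) (hc : 0 < c) (hc1 : c ≠ 1) :
    ∫ x in Ioi (0:ℝ), Real.log (1 + c * x) * ((1 + x) ^ 2)⁻¹
      = c * Real.log c / (c - 1) := by
  have := integral_Ioi_of_hasDerivAt_of_nonneg' (a := 0) (g := Fc c)
    (fun x hx => Fc_deriv c hc hc1 x (by simpa using hx))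
    (fun x hx => by
      have hx0 : (0:ℝ) < x := hx
      have : (0:ℝ) ≤ Real.log (1 + c * x) := Real.log_nonneg (by nlinarith)
      positivity)
    (Fc_lim c hc)
  rw [this]
  unfold Fc
  simp
  ring

noncomputable def F1 (x : ℝ) : ℝ := -((1 + Real.log (1 + x)) / (1 + x))

lemma F1_deriv (x : ℝ) (hx : 0 ≤ x) :
    HasDerivAt F1 (Real.log (1 + x) * ((1 + x) ^ 2)⁻¹) x := by
  have h1x : (1:ℝ) + x ≠ 0 := by linarith
  have h1 : HasDerivAt (fun x : ℝ => 1 + x) 1 x := by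
    simpa using (hasDerivAt_id x).const_add 1
  have hlog2 : HasDerivAt (fun x : ℝ => Real.log (1 + x)) (1 / (1 + x)) x := h1.log h1x
  have h := ((hlog2.const_add 1).div h1 h1x).neg
  refine h.congr_deriv ?_
  field_simp
  ring

lemma F1_lim : Tendsto F1 atTop (𝓝 0) := by
  have h1 : Tendsto (fun x : ℝ => 1 + x) atTop atTop :=
    tendsto_atTop_add_const_left _ 1 tendsto_id
  have h2 := (tendsto_inv_atTop_zero.comp h1)
  have h3 := loglin 1 1 one_pos
  have h4 := (h2.add h3).neg
  norm_num at h4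
  refine h4.congr' ?_
  filter_upwards [eventually_gt_atTop (0:ℝ)] with x hx
  have h1x : (1:ℝ) + x ≠ 0 := by linarith
  unfold F1
  field_simp
  ring

lemma log1p_int : IntegrableOn (fun x : ℝ => Real.log (1 + x) * ((1 + x) ^ 2)⁻¹) (Ioi 0) :=
  integrableOn_Ioi_deriv_of_nonneg' (a := 0) (g := F1)
    (fun x hx => F1_deriv x (by simpa using hx))
    (fun x hx => by
      have hx0 : (0:ℝ) < x := hx
      have : (0:ℝ) ≤ Real.log (1 + x) := Real.log_nonneg (by nlinarith)
      positivity)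
    F1_lim

noncomputable def G (a x : ℝ) : ℝ :=
  (x - a) * Real.log (x - a) / ((1 + a) * (1 + x)) - Real.log (1 + x) / (1 + a)

lemma G_cont (a : ℝ) (ha : 0 < a) : ContinuousOn (G a) (Ici 0) := by
  intro x hx
  have hx0 : (0:ℝ) ≤ x := hx
  have h1x : (1:ℝ) + x ≠ 0 := by linarith
  have h1a : (1:ℝ) + a ≠ 0 := by linarith
  apply ContinuousAt.continuousWithinAt
  have hnum : ContinuousAt (fun x : ℝ => (x - a) * Real.log (x - a)) x :=
    (Real.continuous_mul_log.comp (continuous_id.sub continuous_const)).continuousAt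
  have hden : ContinuousAt (fun x : ℝ => (1 + a) * (1 + x)) x := by fun_prop
  have hlog : ContinuousAt (fun x : ℝ => Real.log (1 + x)) x :=
    (Real.continuousAt_log h1x).comp (by fun_prop)
  exact ((hnum.div hden (by simp [h1x, h1a])).sub (hlog.div_const (1 + a)))

lemma G_deriv (a : ℝ) (ha : 0 < a) (x : ℝ) (hx : 0 ≤ x) (hxa : x ≠ a) :
    HasDerivAt (G a) (Real.log |a - x| * ((1 + x) ^ 2)⁻¹) x := by
  have h1x : (1:ℝ) + x ≠ 0 := by linarith
  have h1a : (1:ℝ) + a ≠ 0 := by linarith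
  have hxa' : x - a ≠ 0 := sub_ne_zero.2 hxa
  have hsub : HasDerivAt (fun x : ℝ => x - a) 1 x := (hasDerivAt_id x).sub_const a
  have hlogxa : HasDerivAt (fun x : ℝ => Real.log (x - a)) (1 / (x - a)) x := hsub.log hxa'
  have hnum := hsub.mul hlogxa
  have hden : HasDerivAt (fun x : ℝ => (1 + a) * (1 + x)) (1 + a) x := by
    simpa using ((hasDerivAt_id x).const_add 1).const_mul (1 + a)
  have h1 : HasDerivAt (fun x : ℝ => 1 + x) 1 x := by
    simpa using (hasDerivAt_id x).const_add 1
  have hlog1x : HasDerivAt (fun x : ℝ => Real.log (1 + x)) (1 / (1 + x)) x := h1.log h1x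
  have h := (hnum.div hden (by simp [h1x, h1a])).sub (hlog1x.div_const (1 + a))
  refine h.congr_deriv ?_
  rw [abs_sub_comm, ← Real.log_abs (x - a)]
  rw [Real.log_abs (x - a)]
  simp only [Pi.mul_apply]
  field_simp
  ring

lemma G_lim (a : ℝ) (ha : 0 < a) : Tendsto (G a) atTop (𝓝 0) := by
  have h1 : Tendsto (fun x : ℝ => Real.log ((-a + 1 * x) / (1 + x))) atTop (𝓝 0) := by
    have := (Real.continuousAt_log one_ne_zero).tendsto.comp (lin_ratio (-a) 1)
    simpa [Function.comp_def] using this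
  have h2 := loglin (-a) 1 one_pos
  have h3 := (h1.const_mul (1 / (1 + a))).sub h2
  norm_num at h3
  refine h3.congr' ?_
  filter_upwards [eventually_gt_atTop a] with x hx
  have hxa : (0:ℝ) < x - a := by linarith
  have h1x : (0:ℝ) < 1 + x := by nlinarith
  have h1a : (1:ℝ) + a ≠ 0 := by linarith
  unfold G
  rw [show -a + x = x - a by ring, Real.log_div (ne_of_gt hxa) (ne_of_gt h1x)]
  field_simp
  ring

lemma A_int_Ioi (a : ℝ) (ha : 0 < a) :
    IntegrableOn (fun x : ℝ => Real.log |a - x| * ((1 + x) ^ 2)⁻¹) (Ioi a) := by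
  -- h := log(1+x)ρ - log|a-x|ρ is nonneg on Ioi a, with antiderivative F1 - G a
  have hD : IntegrableOn
      (fun x : ℝ => Real.log (1 + x) * ((1 + x) ^ 2)⁻¹
        - Real.log |a - x| * ((1 + x) ^ 2)⁻¹) (Ioi a) := by
    apply integrableOn_Ioi_deriv_of_nonneg (a := a) (g := fun x => F1 x - G a x)
    · exact ((F1_deriv a ha.le).continuousAt.continuousWithinAt).sub
        ((G_cont a ha a ha.le).mono (Ici_subset_Ici.2 ha.le))
    · intro x hx
      have hx' : a < x := hx
      exact (F1_deriv x (by linarith)).sub (G_deriv a ha x (by linarith) (by linarith [hx']))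
    · intro x hx
      have hx' : a < x := hx
      have h1 : |a - x| = x - a := by rw [abs_sub_comm]; exact abs_of_pos (by linarith)
      rw [h1, ← sub_mul]
      have h2 : Real.log (x - a) ≤ Real.log (1 + x) :=
        Real.log_le_log (by linarith) (by linarith)
      have h3 : (0:ℝ) ≤ ((1 + x) ^ 2)⁻¹ := by positivity
      nlinarith
    · have := F1_lim.sub (G_lim a ha)
      simpa using this
  have h2 : IntegrableOn (fun x : ℝ => Real.log (1 + x) * ((1 + x) ^ 2)⁻¹) (Ioi a) :=
    log1p_int.mono_set (Ioi_subset_Ioi ha.le)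
  refine MeasureTheory.IntegrableOn.congr_fun (h2.sub hD)
    (fun x hx => by simp only [Pi.sub_apply]; ring) measurableSet_Ioi

lemma A_int_Ioc (a : ℝ) (ha : 0 < a) :
    IntegrableOn (fun x : ℝ => Real.log |a - x| * ((1 + x) ^ 2)⁻¹) (Ioc 0 a) := by
  have hD : IntegrableOn
      (fun x : ℝ => Real.log a * ((1 + x) ^ 2)⁻¹
        - Real.log |a - x| * ((1 + x) ^ 2)⁻¹) (Ioc 0 a) := by
    apply intervalIntegral.integrableOn_deriv_of_nonneg (a := 0) (b := a)
      (g := fun x => Real.log a * (-(1 + x)⁻¹) - G a x)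
    · refine ContinuousOn.sub ?_ ((G_cont a ha).mono Icc_subset_Ici_self)
      intro x hx
      have hx0 : (0:ℝ) ≤ x := hx.1
      have : (1:ℝ) + x ≠ 0 := by linarith
      apply ContinuousAt.continuousWithinAt
      exact continuousAt_const.mul
        (((continuous_const.add continuous_id).continuousAt.inv₀ this).neg)
    · intro x hx
      exact ((rho_deriv x (by have := hx.1; linarith)).const_mul _).sub
        (G_deriv a ha x hx.1.le (ne_of_lt hx.2))
    · intro x hx
      have h1 : |a - x| = a - x := abs_of_pos (by linarith [hx.2])
      rw [h1, ← sub_mul]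
      have h2 : Real.log (a - x) ≤ Real.log a :=
        Real.log_le_log (by linarith [hx.1, hx.2]) (by linarith [hx.1])
      have h3 : (0:ℝ) ≤ ((1 + x) ^ 2)⁻¹ := by positivity
      nlinarith
  have h2 : IntegrableOn (fun x : ℝ => Real.log a * ((1 + x) ^ 2)⁻¹) (Ioc 0 a) :=
    (rho_int.mono_set Ioc_subset_Ioi_self).const_mul _
  refine MeasureTheory.IntegrableOn.congr_fun (h2.sub hD)
    (fun x hx => by simp only [Pi.sub_apply]; ring) measurableSet_Ioc

lemma A_int (a : ℝ) (ha : 0 < a) :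
    IntegrableOn (fun x : ℝ => Real.log |a - x| * ((1 + x) ^ 2)⁻¹) (Ioi 0) := by
  have h := (A_int_Ioc a ha).union (A_int_Ioi a ha)
  rwa [Ioc_union_Ioi_eq_Ioi ha.le] at h

lemma A_val (a : ℝ) (ha : 0 < a) :
    ∫ x in Ioi (0:ℝ), Real.log |a - x| * ((1 + x) ^ 2)⁻¹
      = a / (1 + a) * Real.log a := by
  have hGa : G a a = -(Real.log (1 + a) / (1 + a)) := by
    unfold G; simp
  have hG0 : G a 0 = -(a * Real.log a / (1 + a)) := by
    unfold G
    rw [show (0:ℝ) - a = -a by ring, Real.log_neg_eq_log]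
    simp
    ring
  have hIoi : ∫ x in Ioi a, Real.log |a - x| * ((1 + x) ^ 2)⁻¹ = 0 - G a a := by
    apply integral_Ioi_of_hasDerivAt_of_tendsto
      ((G_cont a ha a ha.le).mono (Ici_subset_Ici.2 ha.le))
      (fun x hx => G_deriv a ha x (by have : a < x := hx; linarith)
        (by have : a < x := hx; linarith))
      (A_int_Ioi a ha) (G_lim a ha)
  have hIoc : ∫ x in Ioc (0:ℝ) a, Real.log |a - x| * ((1 + x) ^ 2)⁻¹ = G a a - G a 0 := by
    rw [← intervalIntegral.integral_of_le ha.le]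
    apply intervalIntegral.integral_eq_sub_of_hasDeriv_right_of_le ha.le
      ((G_cont a ha).mono Icc_subset_Ici_self)
      (fun x hx => (G_deriv a ha x hx.1.le (ne_of_lt hx.2)).hasDerivWithinAt)
    rw [intervalIntegrable_iff_integrableOn_Ioc_of_le ha.le]
    exact A_int_Ioc a ha
  have hsplit : ∫ x in Ioi (0:ℝ), Real.log |a - x| * ((1 + x) ^ 2)⁻¹
      = (∫ x in Ioc (0:ℝ) a, Real.log |a - x| * ((1 + x) ^ 2)⁻¹)
        + ∫ x in Ioi a, Real.log |a - x| * ((1 + x) ^ 2)⁻¹ := by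
    rw [← setIntegral_union (Ioc_disjoint_Ioi le_rfl) measurableSet_Ioi
      (A_int_Ioc a ha) (A_int_Ioi a ha), Ioc_union_Ioi_eq_Ioi ha.le]
  rw [hsplit, hIoc, hIoi, hGa, hG0]
  field_simp
  ring
/-- Remark after Proposition 4.2: if `W` has density `(1+x)^{-2}`
on `(0,∞)`, `c > 0`, `c ≠ 1`, and `A_c = cW/(cW+1)`, then for `0 < y < 1`,
`E[log|y − A_c|] = (y/(c(1−y)+y))·log(y/(c(1−y))) − c·log(c)/(c−1) + log(c(1−y))`. -/
theorem phi_of_tilted_ratio_exponentials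
    {Ω : Type*} [MeasurableSpace Ω] (P : Measure Ω) [IsProbabilityMeasure P]
    (W : Ω → ℝ) (hWmeas : Measurable W)
    (hW : Measure.map W P
      = (volume.restrict (Set.Ioi (0:ℝ))).withDensity fun x =>
          ENNReal.ofReal ((1 + x) ^ (-2 : ℝ)))
    (c : ℝ) (hc : 0 < c) (hc1 : c ≠ 1)
    (y : ℝ) (hy0 : 0 < y) (hy1 : y < 1) :
    ∫ ω, Real.log |y - c * W ω / (c * W ω + 1)| ∂P
      = y / (c * (1 - y) + y) * Real.log (y / (c * (1 - y)))
        - c * Real.log c / (c - 1) + Real.log (c * (1 - y)) := by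
  set b : ℝ := c * (1 - y) with hb_def
  have hb : 0 < b := by apply mul_pos hc; linarith
  set a : ℝ := y / b with ha_def
  have ha : 0 < a := div_pos hy0 hb
  set g : ℝ → ℝ := fun x => Real.log |y - c * x / (c * x + 1)| with hg_def
  have hgm : Measurable g := by
    apply Real.measurable_log.comp
    apply Measurable.abs
    apply Measurable.sub measurable_const
    exact (measurable_const.mul measurable_id).div
      ((measurable_const.mul measurable_id).add measurable_const)
  have step1 : ∫ ω, Real.log |y - c * W ω / (c * W ω + 1)| ∂P
      = ∫ x, g x ∂(Measure.map W P) :=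
    (integral_map hWmeas.aemeasurable hgm.aestronglyMeasurable).symm
  rw [step1, hW]
  have hdm : Measurable fun x : ℝ => Real.toNNReal ((1 + x) ^ (-2 : ℝ)) := by
    apply Measurable.real_toNNReal
    exact (measurable_const.add measurable_id).pow measurable_const
  rw [show (fun x : ℝ => ENNReal.ofReal ((1 + x) ^ (-2 : ℝ)))
      = fun x : ℝ => ((Real.toNNReal ((1 + x) ^ (-2 : ℝ)) : ℝ≥0) : ℝ≥0∞) from rfl]
  rw [integral_withDensity_eq_integral_smul hdm g]
  have key : ∫ x in Ioi (0:ℝ), Real.toNNReal ((1 + x) ^ (-2 : ℝ)) • g x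
      = ∫ x in Ioi (0:ℝ), (Real.log b * ((1 + x) ^ 2)⁻¹
          + Real.log |a - x| * ((1 + x) ^ 2)⁻¹
          - Real.log (1 + c * x) * ((1 + x) ^ 2)⁻¹) := by
    apply integral_congr_ae
    have hne : ∀ᵐ x : ℝ ∂volume, x ≠ a := by
      rw [ae_iff]
      have : {x : ℝ | ¬ x ≠ a} = {a} := by ext t; simp
      rw [this]
      exact Real.volume_singleton
    filter_upwards [ae_restrict_mem measurableSet_Ioi, ae_restrict_of_ae hne] with x hx hxa
    have hx0 : (0:ℝ) < x := hx
    have h1x : (0:ℝ) < 1 + x := by linarith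
    have hcx : (0:ℝ) < c * x + 1 := by nlinarith
    have hrpow : ((1:ℝ) + x) ^ (-2 : ℝ) = (((1 + x) ^ 2)⁻¹ : ℝ) := by
      rw [Real.rpow_neg h1x.le, ← Real.rpow_natCast (1 + x) 2]
      norm_num
    have hcoe : (Real.toNNReal ((1 + x) ^ (-2 : ℝ)) : ℝ) = (((1 + x) ^ 2)⁻¹ : ℝ) := by
      rw [Real.coe_toNNReal _ (by positivity), hrpow]
    have hsplit : y - c * x / (c * x + 1) = (y - b * x) / (c * x + 1) := by
      field_simp
      ring
    have hxa' : a - x ≠ 0 := sub_ne_zero.2 (Ne.symm hxa)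
    have hyb : y - b * x = b * (a - x) := by
      rw [ha_def]
      field_simp
    have hlog : g x = Real.log b + Real.log |a - x| - Real.log (c * x + 1) := by
      rw [hg_def]
      simp only
      rw [hsplit, abs_div, abs_of_pos hcx, hyb, abs_mul, abs_of_pos hb,
        Real.log_div (by positivity) (ne_of_gt hcx),
        Real.log_mul (ne_of_gt hb) (abs_ne_zero.2 hxa')]
    rw [NNReal.smul_def, hcoe, smul_eq_mul, hlog]
    have : Real.log (c * x + 1) = Real.log (1 + c * x) := by ring_nf
    rw [this]
    ring
  rw [key]
  have int1 : IntegrableOn (fun x : ℝ => Real.log b * ((1 + x) ^ 2)⁻¹) (Ioi 0) :=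
    rho_int.const_mul _
  have int2 := A_int a ha
  have int3 := B_int c hc hc1
  have int12 : IntegrableOn (fun x : ℝ => Real.log b * ((1 + x) ^ 2)⁻¹
      + Real.log |a - x| * ((1 + x) ^ 2)⁻¹) (Ioi 0) := int1.add int2
  rw [integral_sub int12 int3, integral_add int1 int2,
    integral_const_mul, rho_val, A_val a ha, B_val c hc hc1]
  have h1a : (0:ℝ) < 1 + a := by linarith
  have hba : b + y ≠ 0 := by positivity
  have heq : a / (1 + a) = y / (b + y) := by
    rw [ha_def]
    field_simp
  rw [heq]
  ring
end

section
/- For every 0 < α < 1 and every λ ≥ 0, ∫₀¹ (1 + λ·u^{−1/α})^{α−1} du = (1+λ)^α − λ^α. (This is the statement that the Dirichlet mean M_{1−α}(F_{1/𝔾_α}) has the same law as U^{−1/α} for U uniform on [0,1], expressed through the order-(1−α) Cauchy–Stieltjes transform.) -/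
open MeasureTheory

/-- for `0 < α < 1` and `λ ≥ 0`,
`∫₀¹ (1 + λ·u^{−1/α})^{α−1} du = (1+λ)^α − λ^α`. -/
theorem bfry_mean_cauchy_stieltjes
    (α : ℝ) (hα0 : 0 < α) (hα1 : α < 1) (l : ℝ) (hl : 0 ≤ l) :
    ∫ u in Set.Ioo (0:ℝ) 1, (1 + l * u ^ (-(1 / α))) ^ (α - 1)
      = (1 + l) ^ α - l ^ α := by
  set f : ℝ → ℝ := fun u => (1 + l * u ^ (-(1 / α))) ^ (α - 1) with hf
  set F : ℝ → ℝ := fun u => (u ^ (1 / α) + l) ^ α with hF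
  have hαne : (1 / α) ≠ 0 := by positivity
  -- continuity of F on [0,1]
  have hcont : ContinuousOn F (Set.Icc 0 1) := by
    apply ContinuousOn.rpow_const
    · exact (ContinuousOn.rpow_const continuousOn_id (fun x _ => Or.inr (by positivity))).add continuousOn_const
    · intro x hx
      right; exact le_of_lt hα0
  -- measurability of f
  have hmeas : Measurable f := by
    rw [hf]
    fun_prop
  -- integrability
  have hint : IntervalIntegrable f volume 0 1 := by
    rw [intervalIntegrable_iff_integrableOn_Ioc_of_le (by norm_num)]
    apply Integrable.mono' (integrable_const 1) (hmeas.aestronglyMeasurable.restrict)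
    · filter_upwards [self_mem_ae_restrict measurableSet_Ioc] with u hu
      have hu0 : 0 < u := hu.1
      have h1 : (1:ℝ) ≤ 1 + l * u ^ (-(1 / α)) := by
        nlinarith [Real.rpow_nonneg hu0.le (-(1/α)), mul_nonneg hl (Real.rpow_nonneg hu0.le (-(1/α)))]
      rw [Real.norm_eq_abs, abs_of_nonneg (Real.rpow_nonneg (by linarith) _)]
      exact Real.rpow_le_one_of_one_le_of_nonpos h1 (by linarith)
  -- derivative
  have hderiv : ∀ u ∈ Set.Ioo (0:ℝ) 1, HasDerivWithinAt F (f u) (Set.Ioi u) u := by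
    intro u hu
    have hu0 : 0 < u := hu.1
    have hg : HasDerivAt (fun x : ℝ => x ^ (1 / α) + l) ((1 / α) * u ^ (1 / α - 1)) u := by
      simpa using (Real.hasDerivAt_rpow_const (p := 1/α) (Or.inl hu0.ne')).add_const l
    have hbase : 0 < u ^ (1 / α) + l := by positivity
    have h2 : HasDerivAt F (α * (u ^ (1 / α) + l) ^ (α - 1) * ((1 / α) * u ^ (1 / α - 1))) u := by
      exact (Real.hasDerivAt_rpow_const (p := α) (Or.inl hbase.ne')).comp u hg
    have heq : α * (u ^ (1 / α) + l) ^ (α - 1) * ((1 / α) * u ^ (1 / α - 1)) = f u := by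
      have h3 : (1:ℝ) + l * u ^ (-(1 / α)) = (u ^ (1 / α) + l) * u ^ (-(1 / α)) := by
        rw [add_mul, ← Real.rpow_add hu0]
        simp [Real.rpow_zero]
      rw [hf]
      simp only
      rw [h3, Real.mul_rpow hbase.le (Real.rpow_nonneg hu0.le _), ← Real.rpow_mul hu0.le]
      have : -(1 / α) * (α - 1) = 1 / α - 1 := by field_simp; ring
      rw [this]
      field_simp
    rw [← heq] at *
    exact h2.hasDerivWithinAt
  have key : ∫ u in (0:ℝ)..1, f u = F 1 - F 0 :=
    intervalIntegral.integral_eq_sub_of_hasDeriv_right_of_le (by norm_num) hcont hderiv hint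
  have hF1 : F 1 = (1 + l) ^ α := by simp [hF]
  have hF0 : F 0 = l ^ α := by simp [hF, Real.zero_rpow (inv_ne_zero hα0.ne'), Real.zero_rpow hαne]
  calc ∫ u in Set.Ioo (0:ℝ) 1, f u
      = ∫ u in Set.Ioc (0:ℝ) 1, f u := (integral_Ioc_eq_integral_Ioo).symm
    _ = ∫ u in (0:ℝ)..1, f u := (intervalIntegral.integral_of_le (by norm_num)).symm
    _ = F 1 - F 0 := key
    _ = (1 + l) ^ α - l ^ α := by rw [hF1, hF0]
end

section
/- Let 0 < α < 1 and let B and B′ be independent random variables with distributions Beta(1−α, α) and Beta(α, 1) respectively. Then the random variable B/B′ has density f(x) = (sin(πα)/π)·x^{−α−1}·(1 − (1−x)^α) for 0 < x ≤ 1, and f(x) = (sin(πα)/π)·x^{−α−1} for x > 1. (The density f_{B_α} from the proof of Proposition 5.1.) -/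
open MeasureTheory ProbabilityTheory
open scoped ENNReal

/-- Scaling change of variables for lower integrals on `ℝ`. -/
lemma lintegral_scale_mul (h : ℝ → ℝ≥0∞) (hh : Measurable h) {y : ℝ} (hy : 0 < y) :
    (∫⁻ b, h b) = ENNReal.ofReal y * ∫⁻ x, h (y * x) := by
  have hmap : Measure.map (y * ·) volume = ENNReal.ofReal |y⁻¹| • volume :=
    Real.map_volume_mul_left hy.ne'
  have h1 : ∫⁻ a, h a ∂(Measure.map (y * ·) volume) = ∫⁻ x, h (y * x) :=
    lintegral_map hh (measurable_const_mul y)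
  rw [hmap, lintegral_smul_measure] at h1
  rw [← h1, smul_eq_mul, ← mul_assoc, abs_of_pos (inv_pos.2 hy), ← ENNReal.ofReal_mul hy.le,
    mul_inv_cancel₀ hy.ne', ENNReal.ofReal_one, one_mul]

lemma aux_intervalIntegrable {α : ℝ} (hα0 : 0 < α) {x m : ℝ} (hx : 0 < x) :
    IntervalIntegrable (fun y => (1 - x * y) ^ (α - 1)) volume 0 m := by
  have h0 : IntervalIntegrable (fun u : ℝ => u ^ (α - 1)) volume (1 - x * m) 1 :=
    intervalIntegral.intervalIntegrable_rpow' (by linarith)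
  have h1 := h0.comp_sub_left 1
  simp only [sub_sub_cancel, sub_self] at h1
  have h2 := h1.comp_mul_left (c := x)
  rw [mul_div_cancel_left₀ _ hx.ne', zero_div] at h2
  simpa using h2.symm

lemma aux_intervalIntegral {α : ℝ} (hα0 : 0 < α) {x m : ℝ} (hx : 0 < x) :
    ∫ y in (0:ℝ)..m, (1 - x * y) ^ (α - 1) = (1 - (1 - x * m) ^ α) / (α * x) := by
  have h1 : (∫ y in (0:ℝ)..m, (1 - x * y) ^ (α - 1))
      = x⁻¹ • ∫ t in (0:ℝ)..(x * m), (1 - t) ^ (α - 1) := by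
    simpa using intervalIntegral.integral_comp_mul_left
      (a := (0:ℝ)) (b := m) (fun t => (1 - t) ^ (α - 1)) hx.ne'
  have h2 : (∫ t in (0:ℝ)..(x * m), (1 - t) ^ (α - 1))
      = ∫ u in (1 - x * m)..(1:ℝ), u ^ (α - 1) := by
    simpa using intervalIntegral.integral_comp_sub_left
      (a := (0:ℝ)) (b := x * m) (fun u => u ^ (α - 1)) 1
  have h3 : (∫ u in (1 - x * m)..(1:ℝ), u ^ (α - 1))
      = (1 - (1 - x * m) ^ α) / α := by
    rw [integral_rpow (Or.inl (by linarith : (-1:ℝ) < α - 1))]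
    rw [sub_add_cancel, Real.one_rpow]
  rw [h1, h2, h3, smul_eq_mul, inv_mul_eq_div, div_div]

/-- density `f_{B_α}` from the proof of Proposition 5.1: for
`B ~ Beta(1−α,α)` and `B′ ~ Beta(α,1)` independent, `B/B′` has density
`(sin(πα)/π)·x^{−α−1}·(1 − (1−x)^α)` for `0 < x ≤ 1` and `(sin(πα)/π)·x^{−α−1}`
for `x > 1`. -/
theorem beta_ratio_density
    {Ω : Type*} [MeasurableSpace Ω] (P : Measure Ω) [IsProbabilityMeasure P]
    (α : ℝ) (hα0 : 0 < α) (hα1 : α < 1)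
    (B B' : Ω → ℝ) (hBmeas : Measurable B) (hB'meas : Measurable B')
    (hB : Measure.map B P = _root_.betaMeasure (1 - α) α)
    (hB' : Measure.map B' P = _root_.betaMeasure α 1)
    (hindep : IndepFun B B' P) :
    Measure.map (fun ω => B ω / B' ω) P
      = (volume.restrict (Set.Ioi (0:ℝ))).withDensity fun x =>
          ENNReal.ofReal (if x ≤ 1 then
              Real.sin (Real.pi * α) / Real.pi * x ^ (-α - 1) * (1 - (1 - x) ^ α)
            else Real.sin (Real.pi * α) / Real.pi * x ^ (-α - 1)) := by
  have hπ : (0:ℝ) < Real.pi := Real.pi_pos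
  set c : ℝ := Real.sin (Real.pi * α) / Real.pi with hc_def
  have hsin : 0 < Real.sin (Real.pi * α) :=
    Real.sin_pos_of_pos_of_lt_pi (by positivity) (by nlinarith)
  have hc : 0 < c := div_pos hsin hπ
  -- density functions
  set F : ℝ → ℝ≥0∞ := (Set.Ioo (0:ℝ) 1).indicator
      (fun b => ENNReal.ofReal (c * b ^ (-α) * (1 - b) ^ (α - 1))) with hF_def
  set G : ℝ → ℝ≥0∞ := (Set.Ioo (0:ℝ) 1).indicator
      (fun y => ENNReal.ofReal (α * y ^ (α - 1))) with hG_def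
  have hFmeas : Measurable F := Measurable.indicator (by fun_prop) measurableSet_Ioo
  have hGmeas : Measurable G := Measurable.indicator (by fun_prop) measurableSet_Ioo
  set φ : ℝ → ℝ≥0∞ := fun x => ENNReal.ofReal (if x ≤ 1 then
      c * x ^ (-α - 1) * (1 - (1 - x) ^ α) else c * x ^ (-α - 1)) with hφ_def
  set D : ℝ → ℝ≥0∞ := (Set.Ioi (0:ℝ)).indicator φ with hD_def
  -- identify the beta measures
  have hμ : _root_.betaMeasure (1 - α) α = volume.withDensity F := by
    rw [_root_.betaMeasure, ← withDensity_indicator measurableSet_Ioo, hF_def]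
    congr 1
    apply Set.indicator_congr
    intro b _
    rw [show (1:ℝ) - α + α = 1 by ring, Real.Gamma_one,
      show (1:ℝ) - α - 1 = -α by ring, mul_comm (Real.Gamma (1-α)),
      Real.Gamma_mul_Gamma_one_sub, one_div_div]
  have hν : _root_.betaMeasure α 1 = volume.withDensity G := by
    rw [_root_.betaMeasure, ← withDensity_indicator measurableSet_Ioo, hG_def]
    congr 1
    apply Set.indicator_congr
    intro y _
    have hΓ : Real.Gamma α ≠ 0 := (Real.Gamma_pos_of_pos hα0).ne'
    have h1 : (1:ℝ) - 1 = 0 := sub_self 1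
    simp only [Real.Gamma_add_one hα0.ne', Real.Gamma_one, h1, Real.rpow_zero, mul_one]
    congr 2
    field_simp
  -- product structure
  haveI hμP : IsProbabilityMeasure (volume.withDensity F) := by
    rw [← hμ, ← hB]; exact Measure.isProbabilityMeasure_map hBmeas.aemeasurable
  haveI hνP : IsProbabilityMeasure (volume.withDensity G) := by
    rw [← hν, ← hB']; exact Measure.isProbabilityMeasure_map hB'meas.aemeasurable
  have hprod : Measure.map (fun ω => (B ω, B' ω)) P
      = (volume.withDensity F).prod (volume.withDensity G) := by
    rw [← hμ, ← hν, ← hB, ← hB']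
    exact (indepFun_iff_map_prod_eq_prod_map_map hBmeas.aemeasurable
      hB'meas.aemeasurable).mp hindep
  have hdiv : Measurable fun p : ℝ × ℝ => p.1 / p.2 := measurable_fst.div measurable_snd
  have hcomp : Measure.map (fun ω => B ω / B' ω) P
      = Measure.map (fun p : ℝ × ℝ => p.1 / p.2)
        ((volume.withDensity F).prod (volume.withDensity G)) := by
    rw [← hprod, Measure.map_map hdiv (hBmeas.prodMk hB'meas)]
    rfl
  have hRHS : ((volume.restrict (Set.Ioi (0:ℝ))).withDensity φ) = volume.withDensity D := by
    rw [hD_def, withDensity_indicator measurableSet_Ioi]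
  rw [hcomp]
  show Measure.map (fun p : ℝ × ℝ => p.1 / p.2)
      ((volume.withDensity F).prod (volume.withDensity G))
      = (volume.restrict (Set.Ioi (0:ℝ))).withDensity φ
  rw [hRHS]
  -- the key pointwise density claim
  set K : ℝ → ℝ≥0∞ := fun x => ∫⁻ y, G y * ENNReal.ofReal y * F (y * x) ∂volume with hK_def
  have claim : ∀ x : ℝ, K x = D x := by
    intro x
    by_cases hx : 0 < x
    · -- positive case
      set m : ℝ := min 1 x⁻¹ with hm_def
      have hm : 0 < m := lt_min one_pos (inv_pos.2 hx)
      have hm1 : m ≤ 1 := min_le_left _ _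
      have hmx : m ≤ x⁻¹ := min_le_right _ _
      have hxm : x * m ≤ 1 := by
        calc x * m ≤ x * x⁻¹ := by nlinarith
        _ = 1 := mul_inv_cancel₀ hx.ne'
      have hint_eq : ∀ y : ℝ, G y * ENNReal.ofReal y * F (y * x)
          = (Set.Ioo (0:ℝ) m).indicator
            (fun y => ENNReal.ofReal (c * α * x ^ (-α) * (1 - x * y) ^ (α - 1))) y := by
        intro y
        by_cases hy : y ∈ Set.Ioo (0:ℝ) m
        · have hy0 : 0 < y := hy.1
          have hy1 : y < 1 := lt_of_lt_of_le hy.2 hm1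
          have hyx : y * x < 1 := by
            have : y < x⁻¹ := lt_of_lt_of_le hy.2 hmx
            calc y * x < x⁻¹ * x := by nlinarith
            _ = 1 := inv_mul_cancel₀ hx.ne'
          have hyx0 : 0 < y * x := mul_pos hy0 hx
          rw [Set.indicator_of_mem hy, hG_def, hF_def,
            Set.indicator_of_mem (Set.mem_Ioo.mpr ⟨hy0, hy1⟩),
            Set.indicator_of_mem (Set.mem_Ioo.mpr ⟨hyx0, hyx⟩)]
          rw [← ENNReal.ofReal_mul (by positivity), ← ENNReal.ofReal_mul (by positivity)]
          congr 1
          have h3 : (y * x) ^ (-α) = y ^ (-α) * x ^ (-α) := Real.mul_rpow hy0.le hx.le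
          have hAB : y ^ (α - 1) * y * y ^ (-α) = 1 := by
            have h4 : y ^ (α - 1) * y = y ^ α := by
              nth_rewrite 2 [← Real.rpow_one y]
              rw [← Real.rpow_add hy0, sub_add_cancel]
            rw [h4, ← Real.rpow_add hy0, add_neg_cancel, Real.rpow_zero]
          rw [h3, show (1:ℝ) - y * x = 1 - x * y by ring]
          linear_combination (c * α * x ^ (-α) * (1 - x * y) ^ (α - 1)) * hAB
        · rw [Set.indicator_of_notMem hy]
          by_cases hy1 : y ∈ Set.Ioo (0:ℝ) 1
          · have hy0 : 0 < y := hy1.1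
            have hym : m ≤ y := by
              by_contra h
              exact hy ⟨hy0, lt_of_not_ge h⟩
            have hxy1 : (1:ℝ) ≤ y * x := by
              have hinvy : x⁻¹ ≤ y := by
                rw [hm_def] at hym
                rcases min_le_iff.mp hym with h1 | h1
                · linarith [hy1.2]
                · exact h1
              calc (1:ℝ) = x⁻¹ * x := (inv_mul_cancel₀ hx.ne').symm
              _ ≤ y * x := by nlinarith
            have : y * x ∉ Set.Ioo (0:ℝ) 1 := fun hmem => absurd hmem.2 (not_lt.mpr hxy1)
            rw [hF_def, Set.indicator_of_notMem this, mul_zero]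
          · rw [hG_def, Set.indicator_of_notMem hy1, zero_mul, zero_mul]
      have hK1 : K x = ∫⁻ y in Set.Ioo (0:ℝ) m,
          ENNReal.ofReal (c * α * x ^ (-α) * (1 - x * y) ^ (α - 1)) ∂volume := by
        rw [hK_def]
        simp only [hint_eq]
        exact lintegral_indicator measurableSet_Ioo _
      have hii : IntervalIntegrable (fun y => (1 - x * y) ^ (α - 1)) volume 0 m :=
        aux_intervalIntegrable hα0 hx
      have hIntOn : IntegrableOn (fun y => c * α * x ^ (-α) * (1 - x * y) ^ (α - 1))
          (Set.Ioo (0:ℝ) m) volume := by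
        have h4 := ((intervalIntegrable_iff_integrableOn_Ioc_of_le hm.le).mp hii)
        have h5 : IntegrableOn (fun y => c * α * x ^ (-α) * (1 - x * y) ^ (α - 1))
            (Set.Ioc 0 m) volume := h4.const_mul _
        exact h5.mono_set Set.Ioo_subset_Ioc_self
      have hnn : 0 ≤ᵐ[volume.restrict (Set.Ioo (0:ℝ) m)]
          fun y => c * α * x ^ (-α) * (1 - x * y) ^ (α - 1) := by
        refine (ae_restrict_iff' measurableSet_Ioo).mpr (ae_of_all _ fun y hy => ?_)
        have h1 : 0 < 1 - x * y := by nlinarith [hy.1, hy.2]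
        have := Real.rpow_nonneg h1.le (α - 1)
        positivity
      have hK2 : K x = ENNReal.ofReal
          (∫ y in Set.Ioo (0:ℝ) m, c * α * x ^ (-α) * (1 - x * y) ^ (α - 1) ∂volume) := by
        rw [hK1, ← ofReal_integral_eq_lintegral_ofReal hIntOn hnn]
      have hval : (∫ y in Set.Ioo (0:ℝ) m, c * α * x ^ (-α) * (1 - x * y) ^ (α - 1) ∂volume)
          = c * α * x ^ (-α) * ((1 - (1 - x * m) ^ α) / (α * x)) := by
        rw [← MeasureTheory.integral_Ioc_eq_integral_Ioo,
          ← intervalIntegral.integral_of_le hm.le, intervalIntegral.integral_const_mul,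
          aux_intervalIntegral hα0 hx]
      have hpow : x ^ (-α - 1) = x ^ (-α) * x⁻¹ := by
        rw [show -α - 1 = -α + (-1) by ring, Real.rpow_add hx, Real.rpow_neg_one]
      have hDx : D x = φ x := Set.indicator_of_mem (Set.mem_Ioi.mpr hx) _
      rw [hK2, hval, hDx]
      simp only [hφ_def]
      by_cases hx1 : x ≤ 1
      · have hminv : (1:ℝ) ≤ x⁻¹ := one_le_inv_iff₀.mpr ⟨hx, hx1⟩
        have hm_eq : m = 1 := by rw [hm_def]; exact min_eq_left hminv
        rw [if_pos hx1, hm_eq, mul_one, hpow]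
        congr 1
        field_simp
      · have hx1' : 1 < x := lt_of_not_ge hx1
        have hinvle : x⁻¹ ≤ 1 := by
          nlinarith [mul_inv_cancel₀ hx.ne', inv_pos.2 hx]
        have hm_eq : m = x⁻¹ := by rw [hm_def]; exact min_eq_right hinvle
        rw [if_neg hx1, hm_eq, mul_inv_cancel₀ hx.ne', sub_self,
          Real.zero_rpow hα0.ne', sub_zero, hpow]
        congr 1
        field_simp
    · -- nonpositive case
      have hDx : D x = 0 := Set.indicator_of_notMem (by simpa using hx) _
      rw [hK_def, hDx]
      have : ∀ y : ℝ, G y * ENNReal.ofReal y * F (y * x) = 0 := by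
        intro y
        by_cases hy : y ∈ Set.Ioo (0:ℝ) 1
        · have : y * x ∉ Set.Ioo (0:ℝ) 1 := by
            intro hmem
            have : 0 < y * x := hmem.1
            nlinarith [hy.1, le_of_not_gt hx]
          rw [hF_def, Set.indicator_of_notMem this, mul_zero]
        · rw [hG_def, Set.indicator_of_notMem hy, zero_mul, zero_mul]
      simp only [this]
      exact lintegral_zero
  -- now the measure computation
  ext s hs
  rw [Measure.map_apply hdiv hs, withDensity_apply _ hs]
  have hind_s : Measurable (s.indicator (1 : ℝ → ℝ≥0∞)) := measurable_const.indicator hs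
  set t : Set (ℝ × ℝ) := (fun p : ℝ × ℝ => p.1 / p.2) ⁻¹' s with ht_def
  have ht : MeasurableSet t := hdiv hs
  have hΨmeas : Measurable fun p : ℝ × ℝ => F p.1 * s.indicator 1 (p.1 / p.2) :=
    (hFmeas.comp measurable_fst).mul (hind_s.comp hdiv)
  set Φ : ℝ → ℝ≥0∞ := fun y => ∫⁻ b, F b * s.indicator 1 (b / y) ∂volume with hΦ_def
  have hΦmeas : Measurable Φ := Measurable.lintegral_prod_left' hΨmeas
  have hWmeas : Measurable (Function.uncurry
      (fun x y : ℝ => G y * ENNReal.ofReal y * (F (y * x) * s.indicator 1 x))) := by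
    apply Measurable.mul
    · exact ((hGmeas.comp measurable_snd).mul
        (ENNReal.measurable_ofReal.comp measurable_snd))
    · exact ((hFmeas.comp (measurable_snd.mul measurable_fst)).mul
        (hind_s.comp measurable_fst))
  calc ((volume.withDensity F).prod (volume.withDensity G)) t
      = ∫⁻ p, t.indicator 1 p ∂((volume.withDensity F).prod (volume.withDensity G)) :=
        (lintegral_indicator_one ht).symm
    _ = ∫⁻ y, ∫⁻ b, t.indicator 1 (b, y) ∂(volume.withDensity F) ∂(volume.withDensity G) :=
        lintegral_prod_symm' _ (measurable_one.indicator ht)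
    _ = ∫⁻ y, Φ y ∂(volume.withDensity G) := by
        refine lintegral_congr fun y => ?_
        have h1 : (fun b : ℝ => t.indicator (1 : ℝ × ℝ → ℝ≥0∞) (b, y))
            = fun b : ℝ => s.indicator (1 : ℝ → ℝ≥0∞) (b / y) := by
          funext b
          by_cases hbs : b / y ∈ s
          · have hmem : (b, y) ∈ (fun p : ℝ × ℝ => p.1 / p.2) ⁻¹' s := hbs
            rw [Set.indicator_of_mem hbs, Set.indicator_of_mem hmem]
            rfl
          · have hmem : (b, y) ∉ (fun p : ℝ × ℝ => p.1 / p.2) ⁻¹' s := hbs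
            rw [Set.indicator_of_notMem hbs, Set.indicator_of_notMem hmem]
        rw [h1, lintegral_withDensity_eq_lintegral_mul volume hFmeas
          (show Measurable fun b : ℝ => s.indicator (1 : ℝ → ℝ≥0∞) (b / y) from
            hind_s.comp (measurable_id.div_const y))]
        exact lintegral_congr fun b => rfl
    _ = ∫⁻ y, (G * Φ) y ∂volume :=
        lintegral_withDensity_eq_lintegral_mul volume hGmeas hΦmeas
    _ = ∫⁻ y, ∫⁻ x, G y * ENNReal.ofReal y * (F (y * x) * s.indicator 1 x) ∂volume ∂volume := by
        refine lintegral_congr fun y => ?_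
        by_cases hy : y ∈ Set.Ioo (0:ℝ) 1
        · have hy0 : 0 < y := hy.1
          have hΦy : Φ y = ENNReal.ofReal y * ∫⁻ x, F (y * x) * s.indicator 1 x ∂volume := by
            have h2 := lintegral_scale_mul (fun b => F b * s.indicator (1 : ℝ → ℝ≥0∞) (b / y))
              (hFmeas.mul (show Measurable fun b : ℝ => s.indicator (1 : ℝ → ℝ≥0∞) (b / y) from
                hind_s.comp (measurable_id.div_const y))) hy0
            rw [show Φ y = ∫⁻ b, F b * s.indicator 1 (b / y) ∂volume from rfl, h2]
            congr 1
            refine lintegral_congr fun x => ?_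
            rw [mul_div_cancel_left₀ _ hy0.ne']
          rw [Pi.mul_apply, hΦy, ← mul_assoc,
            ← lintegral_const_mul _ (show Measurable fun x : ℝ =>
              F (y * x) * s.indicator (1 : ℝ → ℝ≥0∞) x from
              (hFmeas.comp (measurable_const_mul y)).mul hind_s)]
        · have hGy : G y = 0 := by rw [hG_def, Set.indicator_of_notMem hy]
          simp [hGy]
    _ = ∫⁻ x, ∫⁻ y, G y * ENNReal.ofReal y * (F (y * x) * s.indicator 1 x) ∂volume ∂volume :=
        (lintegral_lintegral_swap hWmeas.aemeasurable).symm
    _ = ∫⁻ x, s.indicator 1 x * K x ∂volume := by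
        refine lintegral_congr fun x => ?_
        rw [hK_def, ← lintegral_const_mul _ (show Measurable fun y : ℝ =>
          G y * ENNReal.ofReal y * F (y * x) from
          (hGmeas.mul ENNReal.measurable_ofReal).mul (hFmeas.comp (measurable_id.mul_const x)))]
        refine lintegral_congr fun y => ?_
        ring
    _ = ∫⁻ x, s.indicator D x ∂volume := by
        refine lintegral_congr fun x => ?_
        rw [claim x]
        by_cases hxs : x ∈ s <;> simp [hxs]
    _ = ∫⁻ x in s, D x ∂volume := lintegral_indicator hs _
end
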